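/- arXiv:2507.09181 — 5 statements merged into one kernel-verified Lean document; each statement's English description precedes it below -/
import Mathlib

section
/- Let (Ω, F, P) be a nonatomic probability space, let Φ be an Orlicz function that is finite-valued, continuous and strictly increasing, and let H_Φ be the associated Orlicz premium on L∞₊. If H_Φ is cash-additive, i.e. H_Φ(X + h) = H_Φ(X) + h for every X ∈ L∞₊ and every constant h ≥ 0, then there exist constants a > 0, b > 0 and p ≥ 0 such that Φ(x) = 1 + a·((x−1)₊)^p − b·((x−1)₋)^p for all x ≥ 0, where (y)₊ = max(y,0) and (y)₋ = max(−y,0). -/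
open MeasureTheory Filter Set
open scoped ENNReal

noncomputable section

variable {Ω : Type*} [MeasurableSpace Ω]

/-- `X` belongs to `L^∞_+(P)`: it is measurable, `P`-a.s. nonnegative and
`P`-essentially bounded. -/
def MemLinftyPlus (P : Measure Ω) (X : Ω → ℝ) : Prop :=
  Measurable X ∧ (∀ᵐ ω ∂P, 0 ≤ X ω) ∧ ∃ C : ℝ, ∀ᵐ ω ∂P, X ω ≤ C

/-- `X` belongs to `L^∞_++(P)`: it is measurable, bounded away from `0` and
`P`-essentially bounded. -/
def MemLinftyPlusPlus (P : Measure Ω) (X : Ω → ℝ) : Prop :=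
  Measurable X ∧ (∃ c : ℝ, 0 < c ∧ ∀ᵐ ω ∂P, c ≤ X ω) ∧ ∃ C : ℝ, ∀ᵐ ω ∂P, X ω ≤ C

/-- An Orlicz function `Φ : [0,∞) → ℝ ∪ {±∞}`: nondecreasing, left-continuous,
`Φ(x) > -∞` for `x > 0`, `Φ(x) ≤ 1` for `0 ≤ x ≤ 1` and `Φ(x) > 1` for `x > 1`. -/
structure IsOrliczFunction (Φ : ℝ → EReal) : Prop where
  ne_bot : ∀ x : ℝ, 0 < x → Φ x ≠ ⊥
  le_one : ∀ x : ℝ, 0 ≤ x → x ≤ 1 → Φ x ≤ 1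
  one_lt : ∀ x : ℝ, 1 < x → 1 < Φ x
  mono : ∀ x y : ℝ, 0 ≤ x → x ≤ y → Φ x ≤ Φ y
  left_cont : ∀ x : ℝ, 0 < x → Φ x = ⨆ y : Set.Ico (0 : ℝ) x, Φ (y : ℝ)

/-- The nonnegative part of an extended real, as an extended nonnegative real. -/
def erealToENNReal (x : EReal) : ℝ≥0∞ :=
  if x = ⊤ then ⊤ else ENNReal.ofReal x.toReal

/-- Expectation of an extended-real-valued function: positive part minus negative part. -/
def eexp (P : Measure Ω) (f : Ω → EReal) : EReal :=
  ((∫⁻ ω, erealToENNReal (f ω) ∂P : ℝ≥0∞) : EReal)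
    - ((∫⁻ ω, erealToENNReal (-(f ω)) ∂P : ℝ≥0∞) : EReal)

/-- The (generalized) Orlicz premium `H_Φ(X) = inf {k > 0 | E[Φ(X/k)] ≤ 1}`, with the
convention `H_Φ(X) = 0` if `Φ(0) = -∞` and `P(X = 0) > 0`. -/
def orliczPremium (P : Measure Ω) (Φ : ℝ → EReal) (X : Ω → ℝ) : ℝ :=
  if Φ 0 = ⊥ ∧ 0 < P {ω | X ω = 0} then 0
  else sInf {k : ℝ | 0 < k ∧ eexp P (fun ω => Φ (X ω / k)) ≤ 1}

/-- Addition on `EReal` with the convention `(-∞) + (+∞) = +∞`. -/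
def eadd (a b : EReal) : EReal :=
  if (a = ⊥ ∧ b = ⊤) ∨ (a = ⊤ ∧ b = ⊥) then ⊤ else a + b

/-- Multiplication on `ℝ≥0∞` with the convention `0 * ∞ = ∞`. -/
def gmulE (a b : ℝ≥0∞) : ℝ≥0∞ :=
  if (a = 0 ∧ b = ⊤) ∨ (a = ⊤ ∧ b = 0) then ⊤ else a * b

open scoped Classical

/-! ### Auxiliary lemmas -/

lemma erealToENNReal_coe (r : ℝ) : erealToENNReal (r : EReal) = ENNReal.ofReal r := by
  rw [erealToENNReal, if_neg (EReal.coe_ne_top r), EReal.toReal_coe]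

lemma lintegral_ite_const (P : Measure Ω) {A : Set Ω}
    (hA : MeasurableSet A) (e₁ e₂ : ℝ≥0∞) :
    ∫⁻ ω, (if ω ∈ A then e₁ else e₂) ∂P = e₁ * P A + e₂ * P Aᶜ := by
  rw [← lintegral_add_compl (fun ω => if ω ∈ A then e₁ else e₂) hA]
  congr 1
  · rw [setLIntegral_congr_fun hA (fun ω hω => if_pos hω), setLIntegral_const]
  · rw [setLIntegral_congr_fun hA.compl
      (fun ω hω => if_neg (by simpa using hω)), setLIntegral_const]

lemma EReal_coe_max (x y : ℝ) : ((max x y : ℝ) : EReal) = max (x : EReal) (y : EReal) := by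
  rcases le_total x y with h | h
  · rw [max_eq_right h, max_eq_right (EReal.coe_le_coe_iff.2 h)]
  · rw [max_eq_left h, max_eq_left (EReal.coe_le_coe_iff.2 h)]

lemma eexp_ite (P : Measure Ω) [IsProbabilityMeasure P] {A : Set Ω} (hA : MeasurableSet A)
    {l : ℝ} (hl0 : 0 ≤ l) (hl1 : l ≤ 1) (hPA : P A = ENNReal.ofReal l) (r₁ r₂ : ℝ) :
    eexp P (fun ω => if ω ∈ A then (r₁ : EReal) else (r₂ : EReal))
      = ((l * r₁ + (1 - l) * r₂ : ℝ) : EReal) := by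
  have hPAc : P Aᶜ = ENNReal.ofReal (1 - l) := by
    rw [prob_compl_eq_one_sub hA, hPA, ← ENNReal.ofReal_one, ← ENNReal.ofReal_sub 1 hl0]
  rw [eexp]
  have h₁ : (fun ω => erealToENNReal ((if ω ∈ A then (r₁ : EReal) else (r₂ : EReal)))) =
      fun ω => if ω ∈ A then ENNReal.ofReal r₁ else ENNReal.ofReal r₂ := by
    funext ω; by_cases hω : ω ∈ A <;> simp [hω, erealToENNReal_coe]
  have h₂ : (fun ω => erealToENNReal (-(if ω ∈ A then (r₁ : EReal) else (r₂ : EReal)))) =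
      fun ω => if ω ∈ A then ENNReal.ofReal (-r₁) else ENNReal.ofReal (-r₂) := by
    funext ω; by_cases hω : ω ∈ A <;>
      simp [hω, ← EReal.coe_neg, erealToENNReal_coe]
  rw [h₁, h₂, lintegral_ite_const P hA, lintegral_ite_const P hA, hPA, hPAc,
    ← ENNReal.ofReal_mul' hl0, ← ENNReal.ofReal_mul' hl0,
    ← ENNReal.ofReal_mul' (by linarith : (0:ℝ) ≤ 1 - l),
    ← ENNReal.ofReal_mul' (by linarith : (0:ℝ) ≤ 1 - l),
    neg_mul, neg_mul]
  simp only [EReal.coe_ennreal_add, EReal.coe_ennreal_ofReal, ← EReal_coe_max,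
    ← EReal.coe_add, ← EReal.coe_sub, EReal.coe_eq_coe_iff]
  have e1 := max_zero_sub_max_neg_zero_eq_self (r₁ * l)
  have e2 := max_zero_sub_max_neg_zero_eq_self (r₂ * (1 - l))
  nlinarith [e1, e2]

lemma additive_monotone_linear (F : ℝ → ℝ) (hadd : ∀ x y, F (x + y) = F x + F y)
    (hm : Monotone F) : ∀ x, F x = F 1 * x := by
  have h0 : F 0 = 0 := by have := hadd 0 0; simp at this; linarith
  have hq : ∀ q : ℚ, F (q : ℝ) = F 1 * (q : ℝ) := by
    intro q
    let Fh : ℝ →+ ℝ := AddMonoidHom.mk' F hadd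
    have := map_ratCast_smul Fh ℝ ℝ q (1 : ℝ)
    simpa [Fh, smul_eq_mul, mul_comm] using this
  have hF1 : 0 ≤ F 1 := by have := hm (zero_le_one (α := ℝ)); rw [h0] at this; exact this
  intro x
  by_contra hne
  rcases lt_or_gt_of_ne hne with hlt | hgt
  · -- F x < F 1 * x
    rcases eq_or_lt_of_le hF1 with hF1' | hF1'
    · obtain ⟨q, hq1⟩ := exists_rat_lt x
      have h1 : F (q : ℝ) ≤ F x := hm hq1.le
      rw [hq q, ← hF1'] at h1
      rw [← hF1'] at hlt
      simp at h1 hlt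
      linarith
    · have hx : F x / F 1 < x := by rw [div_lt_iff₀ hF1']; linarith [mul_comm (F 1) x]
      obtain ⟨q, hq1, hq2⟩ := exists_rat_btwn hx
      have h1 : F (q : ℝ) ≤ F x := hm hq2.le
      rw [hq q] at h1
      have : (q : ℝ) ≤ F x / F 1 := by rw [le_div_iff₀ hF1']; linarith [mul_comm (F 1) (q : ℝ)]
      linarith
  · -- F 1 * x < F x
    rcases eq_or_lt_of_le hF1 with hF1' | hF1'
    · obtain ⟨q, hq1⟩ := exists_rat_gt x
      have h1 : F x ≤ F (q : ℝ) := hm hq1.le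
      rw [hq q, ← hF1'] at h1
      rw [← hF1'] at hgt
      simp at h1 hgt
      linarith
    · have hx : x < F x / F 1 := by rw [lt_div_iff₀ hF1']; linarith [mul_comm (F 1) x]
      obtain ⟨q, hq1, hq2⟩ := exists_rat_btwn hx
      have h1 : F x ≤ F (q : ℝ) := hm hq1.le
      rw [hq q] at h1
      have : F x / F 1 ≤ (q : ℝ) := by rw [div_le_iff₀ hF1']; linarith [mul_comm (F 1) (q : ℝ)]
      linarith

/-- The purely real-analytic part: a strictly monotone `φ` with `φ 1 = 1` satisfying the
functional equation coming from cash-additivity must be of power form. -/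
lemma real_collapse (φ : ℝ → ℝ) (hsm : StrictMonoOn φ (Set.Ici (0 : ℝ))) (hφ1 : φ 1 = 1)
    (hKL : ∀ u v l : ℝ, 1 < u → 0 ≤ v → v < 1 → 0 < l → l < 1 →
      l * φ u + (1 - l) * φ v = 1 → ∀ h : ℝ, 0 ≤ h →
      l * φ ((u + h) / (1 + h)) + (1 - l) * φ ((v + h) / (1 + h)) = 1) :
    ∃ a b p : ℝ, 0 < a ∧ 0 < b ∧ 0 < p ∧
      ∀ x : ℝ, 0 ≤ x → φ x = 1 + a * (max (x - 1) 0) ^ p - b * (max (1 - x) 0) ^ p := by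
  set f : ℝ → ℝ := fun t => φ (1 + t) - 1 with hf
  set g : ℝ → ℝ := fun s => 1 - φ (1 - s) with hg
  have hfpos : ∀ t : ℝ, 0 < t → 0 < f t := by
    intro t ht
    have h1 : φ 1 < φ (1 + t) :=
      hsm (Set.mem_Ici.2 zero_le_one) (Set.mem_Ici.2 (by linarith)) (by linarith)
    simp only [hf]; rw [hφ1] at h1; linarith
  have hgpos : ∀ s : ℝ, 0 < s → s ≤ 1 → 0 < g s := by
    intro s hs0 hs1
    have h1 : φ (1 - s) < φ 1 :=
      hsm (Set.mem_Ici.2 (by linarith)) (Set.mem_Ici.2 zero_le_one) (by linarith)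
    simp only [hg]; rw [hφ1] at h1; linarith
  have hfsm : ∀ t t' : ℝ, 0 < t → t < t' → f t < f t' := by
    intro t t' ht htt'
    have := hsm (Set.mem_Ici.2 (by linarith : (0:ℝ) ≤ 1 + t))
      (Set.mem_Ici.2 (by linarith : (0:ℝ) ≤ 1 + t')) (by linarith)
    simp only [hf]; linarith
  -- The functional equation
  have FE : ∀ t : ℝ, 0 < t → ∀ s : ℝ, 0 < s → s ≤ 1 → ∀ r : ℝ, 0 < r → r ≤ 1 →
      f (r * t) * g s = f t * g (r * s) := by
    intro t ht s hs0 hs1 r hr0 hr1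
    have hft := hfpos t ht
    have hgs := hgpos s hs0 hs1
    have hden : 0 < f t + g s := by linarith
    set l : ℝ := g s / (f t + g s) with hl
    have hl0 : 0 < l := div_pos hgs hden
    have hl1 : l < 1 := by rw [hl, div_lt_one hden]; linarith
    have hkey : l * f t = (1 - l) * g s := by
      rw [hl]; field_simp; ring
    have hbase : l * φ (1 + t) + (1 - l) * φ (1 - s) = 1 := by
      have h1 : φ (1 + t) = 1 + f t := by simp [hf]
      have h2 : φ (1 - s) = 1 - g s := by simp [hg]
      rw [h1, h2]; nlinarith [hkey]
    set h : ℝ := 1 / r - 1 with hhd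
    have hh0 : 0 ≤ h := by
      have : 1 ≤ 1 / r := by rw [le_div_iff₀ hr0]; linarith
      rw [hhd]; linarith
    have h1h : 1 + h = 1 / r := by rw [hhd]; ring
    have e1 : (1 + t + h) / (1 + h) = 1 + r * t := by
      rw [h1h, hhd]; field_simp; ring
    have e2 : (1 - s + h) / (1 + h) = 1 - r * s := by
      rw [h1h, hhd]; field_simp; ring
    have hres := hKL (1 + t) (1 - s) l (by linarith) (by linarith) (by linarith) hl0 hl1
      hbase h hh0
    rw [e1, e2] at hres
    have hA : l * f (r * t) = (1 - l) * g (r * s) := by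
      have h1 : φ (1 + r * t) = 1 + f (r * t) := by simp [hf]
      have h2 : φ (1 - r * s) = 1 - g (r * s) := by simp [hg]
      rw [h1, h2] at hres; nlinarith [hres]
    have hmain : l * (f (r * t) * g s) = l * (f t * g (r * s)) := by
      calc l * (f (r * t) * g s) = (l * f (r * t)) * g s := by ring
        _ = ((1 - l) * g (r * s)) * g s := by rw [hA]
        _ = ((1 - l) * g s) * g (r * s) := by ring
        _ = (l * f t) * g (r * s) := by rw [← hkey]
        _ = l * (f t * g (r * s)) := by ring
    exact mul_left_cancel₀ (ne_of_gt hl0) hmain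
  have ha : 0 < f 1 := hfpos 1 one_pos
  have hb : 0 < g 1 := hgpos 1 one_pos le_rfl
  set C : ℝ → ℝ := fun r => f r / f 1 with hC
  -- scaling relation for r ≤ 1
  have step1 : ∀ t : ℝ, 0 < t → ∀ r : ℝ, 0 < r → r ≤ 1 → f (r * t) = f t * C r := by
    intro t ht r hr0 hr1
    have h1 := FE t ht 1 one_pos le_rfl r hr0 hr1
    have h2 := FE 1 one_pos 1 one_pos le_rfl r hr0 hr1
    rw [mul_one] at h1 h2
    -- h1 : f (r*t) * g 1 = f t * g r ;  h2 : f r * g 1 = f 1 * g r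
    have hc : f (r * t) * f 1 = f t * f r := by
      apply mul_right_cancel₀ (ne_of_gt hb)
      calc f (r * t) * f 1 * g 1 = (f t * g r) * f 1 := by rw [← h1]; ring
        _ = f t * (f 1 * g r) := by ring
        _ = f t * (f r * g 1) := by rw [← h2]
        _ = f t * f r * g 1 := by ring
    rw [hC]
    rw [mul_div_assoc'] at *
    rw [eq_div_iff (ne_of_gt ha)]
    linarith [hc]
  have gform : ∀ r : ℝ, 0 < r → r ≤ 1 → g r = g 1 * C r := by
    intro r hr0 hr1
    have h2 := FE 1 one_pos 1 one_pos le_rfl r hr0 hr1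
    rw [mul_one] at h2
    -- h2 : f r * g 1 = f 1 * g r
    rw [hC, eq_comm, mul_div_assoc']
    rw [div_eq_iff (ne_of_gt ha)]
    linarith [h2]
  have Cpos : ∀ r : ℝ, 0 < r → 0 < C r := fun r hr => div_pos (hfpos r hr) ha
  -- scaling for all r > 0
  have fml : ∀ r : ℝ, 0 < r → ∀ t : ℝ, 0 < t → f (r * t) = f t * C r := by
    intro r hr t ht
    rcases le_or_gt r 1 with h1 | h1
    · exact step1 t ht r hr h1
    · have hri0 : 0 < r⁻¹ := inv_pos.2 hr
      have hri1 : r⁻¹ ≤ 1 := by rw [inv_le_one_iff₀]; right; exact h1.le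
      have e1 := step1 (r * t) (by positivity) r⁻¹ hri0 hri1
      rw [inv_mul_cancel_left₀ (ne_of_gt hr)] at e1
      -- e1 : f t = f (r * t) * C r⁻¹
      have e2 := step1 r hr r⁻¹ hri0 hri1
      rw [inv_mul_cancel₀ (ne_of_gt hr)] at e2
      -- e2 : f 1 = f r * C r⁻¹
      have hfr : 0 < f r := hfpos r (by linarith)
      have hCri : C r⁻¹ = f 1 / f r := by
        rw [eq_div_iff (ne_of_gt hfr)]
        linear_combination e2.symm
      have hCr : C r * C r⁻¹ = 1 := by
        rw [hCri]; simp only [hC]; field_simp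
      calc f (r * t) = f (r * t) * (C r⁻¹ * C r) := by
            rw [show C r⁻¹ * C r = 1 by linarith [hCr]]; ring
        _ = (f (r * t) * C r⁻¹) * C r := by ring
        _ = f t * C r := by rw [← e1]
  have Cmul : ∀ r r' : ℝ, 0 < r → 0 < r' → C (r * r') = C r * C r' := by
    intro r r' hr hr'
    have e1 := fml r hr r' hr'
    have e2 := fml r' hr' 1 one_pos
    rw [mul_one] at e2
    -- e1 : f (r * r') = f r' * C r ; e2 : f r' = f 1 * C r'
    simp only [hC] at *
    rw [e1, e2]
    field_simp
  have Csm : ∀ r r' : ℝ, 0 < r → r < r' → C r < C r' := by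
    intro r r' hr hrr'
    have := hfsm r r' hr hrr'
    exact div_lt_div_of_pos_right this ha
  -- the logarithmic additive function
  set L : ℝ → ℝ := fun y => Real.log (C (Real.exp y)) with hL
  have Ladd : ∀ x y : ℝ, L (x + y) = L x + L y := by
    intro x y
    simp only [hL]
    rw [Real.exp_add, Cmul _ _ (Real.exp_pos x) (Real.exp_pos y),
      Real.log_mul (ne_of_gt (Cpos _ (Real.exp_pos x))) (ne_of_gt (Cpos _ (Real.exp_pos y)))]
  have Lsm : StrictMono L := by
    intro x y hxy
    exact Real.log_lt_log (Cpos _ (Real.exp_pos x))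
      (Csm _ _ (Real.exp_pos x) (Real.exp_lt_exp.2 hxy))
  have Llin := additive_monotone_linear L Ladd Lsm.monotone
  set p : ℝ := L 1 with hp
  have hC1 : C 1 = 1 := by simp only [hC]; field_simp
  have hL0 : L 0 = 0 := by simp only [hL]; rw [Real.exp_zero, hC1, Real.log_one]
  have hppos : 0 < p := by
    have := Lsm (zero_lt_one (α := ℝ))
    rw [hL0] at this; exact this
  have Crpow : ∀ r : ℝ, 0 < r → C r = r ^ p := by
    intro r hr
    have h2 : Real.log (C r) = p * Real.log r := by
      have h3 := Llin (Real.log r)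
      simp only [hL] at h3
      rwa [Real.exp_log hr] at h3
    rw [← Real.exp_log (Cpos r hr), h2, Real.rpow_def_of_pos hr, mul_comm]
  refine ⟨f 1, g 1, p, ha, hb, hppos, ?_⟩
  intro x hx
  rcases lt_trichotomy x 1 with hx1 | hx1 | hx1
  · -- x < 1
    have h1 : max (x - 1) 0 = 0 := max_eq_right (by linarith)
    have h2 : max (1 - x) 0 = 1 - x := max_eq_left (by linarith)
    have hgx : g (1 - x) = g 1 * C (1 - x) := gform (1 - x) (by linarith) (by linarith)
    have hφx : g (1 - x) = 1 - φ x := by simp only [hg]; ring_nf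
    rw [h1, h2, Real.zero_rpow (ne_of_gt hppos), ← Crpow (1 - x) (by linarith)]
    rw [hgx] at hφx
    linarith [hφx]
  · subst hx1
    rw [sub_self, max_self, Real.zero_rpow (ne_of_gt hppos), hφ1]
    ring
  · -- 1 < x
    have h1 : max (x - 1) 0 = x - 1 := max_eq_left (by linarith)
    have h2 : max (1 - x) 0 = 0 := max_eq_right (by linarith)
    have hfx : f (x - 1) = f 1 * C (x - 1) := by
      have := fml (x - 1) (by linarith) 1 one_pos
      rw [mul_one] at this; exact this
    have hφx : f (x - 1) = φ x - 1 := by simp only [hf]; ring_nf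
    rw [h1, h2, Real.zero_rpow (ne_of_gt hppos), ← Crpow (x - 1) (by linarith)]
    rw [hfx] at hφx
    linarith [hφx]

/-! ### Facts about the real-valued restriction of `Φ` -/

section PhiFacts

variable {Φ : ℝ → EReal}

lemma phi_coe (hfin : ∀ x : ℝ, 0 ≤ x → Φ x ≠ ⊥ ∧ Φ x ≠ ⊤) {x : ℝ} (hx : 0 ≤ x) :
    (((Φ x).toReal : ℝ) : EReal) = Φ x :=
  EReal.coe_toReal (hfin x hx).2 (hfin x hx).1

lemma phi_le_one (hΦ : IsOrliczFunction Φ) (hfin : ∀ x : ℝ, 0 ≤ x → Φ x ≠ ⊥ ∧ Φ x ≠ ⊤)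
    {x : ℝ} (hx : 0 ≤ x) (hx1 : x ≤ 1) : (Φ x).toReal ≤ 1 := by
  have := hΦ.le_one x hx hx1
  rw [← phi_coe hfin hx, ← EReal.coe_one, EReal.coe_le_coe_iff] at this
  exact this

lemma phi_monoOn (hΦ : IsOrliczFunction Φ) (hfin : ∀ x : ℝ, 0 ≤ x → Φ x ≠ ⊥ ∧ Φ x ≠ ⊤) :
    MonotoneOn (fun x => (Φ x).toReal) (Set.Ici (0 : ℝ)) := by
  intro x hx y hy hxy
  have := hΦ.mono x y hx hxy
  rw [← phi_coe hfin hx, ← phi_coe hfin hy, EReal.coe_le_coe_iff] at this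
  exact this

lemma phi_strictMonoOn (hfin : ∀ x : ℝ, 0 ≤ x → Φ x ≠ ⊥ ∧ Φ x ≠ ⊤)
    (hstrict : StrictMonoOn Φ (Set.Ici (0 : ℝ))) :
    StrictMonoOn (fun x => (Φ x).toReal) (Set.Ici (0 : ℝ)) := by
  intro x hx y hy hxy
  have := hstrict hx hy hxy
  rw [← phi_coe hfin hx, ← phi_coe hfin hy, EReal.coe_lt_coe_iff] at this
  exact this

lemma phi_contOn (hfin : ∀ x : ℝ, 0 ≤ x → Φ x ≠ ⊥ ∧ Φ x ≠ ⊤)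
    (hcont : ContinuousOn Φ (Set.Ici (0 : ℝ))) :
    ContinuousOn (fun x => (Φ x).toReal) (Set.Ici (0 : ℝ)) := by
  apply EReal.continuousOn_toReal.comp hcont
  intro x hx
  simp only [Set.mem_compl_iff, Set.mem_insert_iff, Set.mem_singleton_iff]
  push_neg
  exact ⟨(hfin x hx).1, (hfin x hx).2⟩

lemma Phi_one_eq_one (hΦ : IsOrliczFunction Φ)
    (hcont : ContinuousOn Φ (Set.Ici (0 : ℝ))) : Φ 1 = 1 := by
  refine le_antisymm (hΦ.le_one 1 zero_le_one le_rfl) ?_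
  have hc : ContinuousWithinAt Φ (Set.Ici 0) 1 := hcont 1 (by norm_num)
  have hseq : Tendsto (fun n : ℕ => (1 + 1 / (n + 1) : ℝ)) atTop (nhdsWithin 1 (Set.Ici 0)) := by
    apply tendsto_nhdsWithin_of_tendsto_nhds_of_eventually_within
    · have h0 : Tendsto (fun n : ℕ => (1 / (n + 1) : ℝ)) atTop (nhds 0) :=
        tendsto_one_div_add_atTop_nhds_zero_nat
      simpa using h0.const_add 1
    · exact Eventually.of_forall fun n => by
        simp only [Set.mem_Ici]; positivity
  have ht : Tendsto (fun n : ℕ => Φ (1 + 1 / (n + 1))) atTop (nhds (Φ 1)) :=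
    hc.tendsto.comp hseq
  refine ge_of_tendsto ht (Eventually.of_forall fun n => ?_)
  refine (hΦ.one_lt _ ?_).le
  have : (0:ℝ) < 1 / (n + 1) := by positivity
  linarith

end PhiFacts

/-! ### The Orlicz premium of a binary random variable -/

section Binary

variable (P : Measure Ω) [IsProbabilityMeasure P] (Φ : ℝ → EReal)

lemma bin_eexp (hfin : ∀ x : ℝ, 0 ≤ x → Φ x ≠ ⊥ ∧ Φ x ≠ ⊤)
    {A : Set Ω} (hA : MeasurableSet A) {l : ℝ} (hl0 : 0 ≤ l) (hl1 : l ≤ 1)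
    (hPA : P A = ENNReal.ofReal l) {w z : ℝ} (hz : 0 ≤ z) (hw : 0 ≤ w) {k : ℝ} (hk : 0 < k) :
    eexp P (fun ω => Φ ((if ω ∈ A then w else z) / k))
      = ((l * (Φ (w / k)).toReal + (1 - l) * (Φ (z / k)).toReal : ℝ) : EReal) := by
  have heq : (fun ω => Φ ((if ω ∈ A then w else z) / k)) =
      fun ω => if ω ∈ A then (((Φ (w / k)).toReal : ℝ) : EReal)
        else (((Φ (z / k)).toReal : ℝ) : EReal) := by
    funext ω
    by_cases hω : ω ∈ A
    · simp only [hω, if_true]; rw [phi_coe hfin (div_nonneg hw hk.le)]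
    · simp only [hω, if_false]; rw [phi_coe hfin (div_nonneg hz hk.le)]
  rw [heq, eexp_ite P hA hl0 hl1 hPA]

lemma bin_set_eq (hfin : ∀ x : ℝ, 0 ≤ x → Φ x ≠ ⊥ ∧ Φ x ≠ ⊤)
    {A : Set Ω} (hA : MeasurableSet A) {l : ℝ} (hl0 : 0 ≤ l) (hl1 : l ≤ 1)
    (hPA : P A = ENNReal.ofReal l) {w z : ℝ} (hz : 0 ≤ z) (hw : 0 ≤ w) :
    {k : ℝ | 0 < k ∧ eexp P (fun ω => Φ ((if ω ∈ A then w else z) / k)) ≤ 1}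
      = {k : ℝ | 0 < k ∧
          l * (Φ (w / k)).toReal + (1 - l) * (Φ (z / k)).toReal ≤ 1} := by
  ext k
  simp only [Set.mem_setOf_eq]
  constructor
  · rintro ⟨hk, hle⟩
    refine ⟨hk, ?_⟩
    rw [bin_eexp P Φ hfin hA hl0 hl1 hPA hz hw hk, ← EReal.coe_one,
      EReal.coe_le_coe_iff] at hle
    exact hle
  · rintro ⟨hk, hle⟩
    refine ⟨hk, ?_⟩
    rw [bin_eexp P Φ hfin hA hl0 hl1 hPA hz hw hk, ← EReal.coe_one]
    exact EReal.coe_le_coe_iff.2 hle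

lemma bin_premium_eq (hΦ : IsOrliczFunction Φ)
    (hfin : ∀ x : ℝ, 0 ≤ x → Φ x ≠ ⊥ ∧ Φ x ≠ ⊤)
    (hstrict : StrictMonoOn Φ (Set.Ici (0 : ℝ)))
    {A : Set Ω} (hA : MeasurableSet A) {l : ℝ} (hl0 : 0 < l) (hl1 : l < 1)
    (hPA : P A = ENNReal.ofReal l) {w z : ℝ} (hz : 0 ≤ z) (hzw : z ≤ w) (hw : 0 < w)
    {k₀ : ℝ} (hk₀ : 0 < k₀)
    (hroot : l * (Φ (w / k₀)).toReal + (1 - l) * (Φ (z / k₀)).toReal = 1) :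
    orliczPremium P Φ (fun ω => if ω ∈ A then w else z) = k₀ := by
  set φ : ℝ → ℝ := fun x => (Φ x).toReal with hφ
  have hw0 : (0:ℝ) ≤ w := hz.trans hzw
  rw [orliczPremium, if_neg (fun hcon => (hfin 0 le_rfl).1 hcon.1)]
  have hset := bin_set_eq P Φ hfin hA hl0.le hl1.le hPA hz hw0
  rw [hset]
  have hmem : k₀ ∈ {k : ℝ | 0 < k ∧ l * φ (w / k) + (1 - l) * φ (z / k) ≤ 1} :=
    ⟨hk₀, le_of_eq hroot⟩
  have hlb : ∀ k ∈ {k : ℝ | 0 < k ∧ l * φ (w / k) + (1 - l) * φ (z / k) ≤ 1}, k₀ ≤ k := by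
    rintro k ⟨hk, hle⟩
    by_contra hlt
    push_neg at hlt
    have h1 : w / k₀ < w / k := div_lt_div_of_pos_left hw hk hlt
    have h2 : φ (w / k₀) < φ (w / k) :=
      phi_strictMonoOn hfin hstrict (Set.mem_Ici.2 (div_nonneg hw0 hk₀.le))
        (Set.mem_Ici.2 (div_nonneg hw0 hk.le)) h1
    have h3 : φ (z / k₀) ≤ φ (z / k) := by
      apply phi_monoOn hΦ hfin (Set.mem_Ici.2 (div_nonneg hz hk₀.le))
        (Set.mem_Ici.2 (div_nonneg hz hk.le))
      exact div_le_div_of_nonneg_left hz hk hlt.le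
    nlinarith [mul_lt_mul_of_pos_left h2 hl0,
      mul_le_mul_of_nonneg_left h3 (by linarith : (0:ℝ) ≤ 1 - l)]
  exact le_antisymm (csInf_le ⟨k₀, hlb⟩ hmem) (le_csInf ⟨k₀, hmem⟩ hlb)

lemma bin_root_of_premium (hΦ : IsOrliczFunction Φ)
    (hfin : ∀ x : ℝ, 0 ≤ x → Φ x ≠ ⊥ ∧ Φ x ≠ ⊤)
    (hcont : ContinuousOn Φ (Set.Ici (0 : ℝ)))
    {A : Set Ω} (hA : MeasurableSet A) {l : ℝ} (hl0 : 0 < l) (hl1 : l < 1)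
    (hPA : P A = ENNReal.ofReal l) {w z : ℝ} (hz : 0 ≤ z) (hzw : z ≤ w) (hw : 0 < w)
    {k₀ : ℝ} (hk₀ : 0 < k₀)
    (hprem : orliczPremium P Φ (fun ω => if ω ∈ A then w else z) = k₀) :
    l * (Φ (w / k₀)).toReal + (1 - l) * (Φ (z / k₀)).toReal = 1 := by
  set φ : ℝ → ℝ := fun x => (Φ x).toReal with hφ
  have hw0 : (0:ℝ) ≤ w := hz.trans hzw
  set G : ℝ → ℝ := fun k => l * φ (w / k) + (1 - l) * φ (z / k) with hG
  set S : Set ℝ := {k : ℝ | 0 < k ∧ G k ≤ 1} with hS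
  have hprem' : sInf S = k₀ := by
    rw [orliczPremium, if_neg (fun hcon => (hfin 0 le_rfl).1 hcon.1)] at hprem
    have hset := bin_set_eq P Φ hfin hA hl0.le hl1.le hPA hz hw0
    rw [hset] at hprem
    exact hprem
  -- G is antitone on positive reals
  have hanti : ∀ k k' : ℝ, 0 < k → k ≤ k' → G k' ≤ G k := by
    intro k k' hk hkk'
    have hk' : 0 < k' := lt_of_lt_of_le hk hkk'
    have h1 : φ (w / k') ≤ φ (w / k) :=
      phi_monoOn hΦ hfin (Set.mem_Ici.2 (div_nonneg hw0 hk'.le))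
        (Set.mem_Ici.2 (div_nonneg hw0 hk.le)) (div_le_div_of_nonneg_left hw0 hk hkk')
    have h2 : φ (z / k') ≤ φ (z / k) :=
      phi_monoOn hΦ hfin (Set.mem_Ici.2 (div_nonneg hz hk'.le))
        (Set.mem_Ici.2 (div_nonneg hz hk.le)) (div_le_div_of_nonneg_left hz hk hkk')
    simp only [hG]
    nlinarith [mul_le_mul_of_nonneg_left h1 hl0.le,
      mul_le_mul_of_nonneg_left h2 (by linarith : (0:ℝ) ≤ 1 - l)]
  have hne : S.Nonempty := by
    refine ⟨max w 1, ?_, ?_⟩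
    · exact lt_of_lt_of_le one_pos (le_max_right w 1)
    · have hm : (0:ℝ) < max w 1 := lt_of_lt_of_le one_pos (le_max_right w 1)
      have h1 : φ (w / max w 1) ≤ 1 :=
        phi_le_one hΦ hfin (div_nonneg hw0 hm.le)
          ((div_le_one hm).2 (le_max_left w 1))
      have h2 : φ (z / max w 1) ≤ 1 :=
        phi_le_one hΦ hfin (div_nonneg hz hm.le)
          ((div_le_one hm).2 (hzw.trans (le_max_left w 1)))
      simp only [hG]
      nlinarith [mul_le_mul_of_nonneg_left h1 hl0.le,
        mul_le_mul_of_nonneg_left h2 (by linarith : (0:ℝ) ≤ 1 - l)]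
  have hbdd : BddBelow S := ⟨0, fun k hk => hk.1.le⟩
  -- G is continuous at k₀
  have hGcont : ContinuousAt G k₀ := by
    have hφcont := phi_contOn hfin hcont
    have hterm : ∀ y : ℝ, 0 < y → ContinuousAt (fun k : ℝ => φ (y / k)) k₀ := by
      intro y hy
      have hdiv : ContinuousAt (fun k : ℝ => y / k) k₀ :=
        ContinuousAt.div continuousAt_const continuousAt_id (ne_of_gt hk₀)
      have hphi : ContinuousAt φ (y / k₀) :=
        hφcont.continuousAt (Ici_mem_nhds (by positivity))
      exact hphi.comp hdiv
    have c1 : ContinuousAt (fun k : ℝ => φ (w / k)) k₀ := hterm w hw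
    have c2 : ContinuousAt (fun k : ℝ => φ (z / k)) k₀ := by
      rcases eq_or_lt_of_le hz with hz0 | hz0
      · simp only [← hz0, zero_div]
        exact continuousAt_const
      · exact hterm z hz0
    exact (continuousAt_const.mul c1).add (continuousAt_const.mul c2)
  -- values above the infimum are in S
  have hgt : ∀ k : ℝ, k₀ < k → G k ≤ 1 := by
    intro k hk
    obtain ⟨s, hsS, hsk⟩ := (csInf_lt_iff hbdd hne).1 (hprem' ▸ hk)
    exact le_trans (hanti s k hsS.1 hsk.le) hsS.2
  have hlt : ∀ k : ℝ, 0 < k → k < k₀ → 1 < G k := by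
    intro k hk hkk₀
    by_contra hle
    push_neg at hle
    have : k₀ ≤ k := hprem' ▸ csInf_le hbdd ⟨hk, hle⟩
    linarith
  have h1 : G k₀ ≤ 1 := by
    have ht : Tendsto G (nhdsWithin k₀ (Set.Ioi k₀)) (nhds (G k₀)) :=
      hGcont.continuousWithinAt
    exact le_of_tendsto ht (eventually_nhdsWithin_of_forall fun k hk => hgt k hk)
  have h2 : 1 ≤ G k₀ := by
    have ht : Tendsto G (nhdsWithin k₀ (Set.Iio k₀)) (nhds (G k₀)) :=
      hGcont.continuousWithinAt
    refine ge_of_tendsto ht ?_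
    filter_upwards [(eventually_gt_nhds hk₀).filter_mono nhdsWithin_le_nhds,
      eventually_mem_nhdsWithin] with k hk1 hk2
    exact (hlt k hk1 hk2).le
  have : G k₀ = 1 := le_antisymm h1 h2
  simpa only [hG] using this

end Binary

/-! ### The key functional equation from cash-additivity -/

lemma key_functional (P : Measure Ω) [IsProbabilityMeasure P]
    (hP : ∀ p : ℝ, 0 ≤ p → p ≤ 1 →
      ∃ A : Set Ω, MeasurableSet A ∧ P A = ENNReal.ofReal p)
    (Φ : ℝ → EReal) (hΦ : IsOrliczFunction Φ)
    (hfin : ∀ x : ℝ, 0 ≤ x → Φ x ≠ ⊥ ∧ Φ x ≠ ⊤)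
    (hcont : ContinuousOn Φ (Set.Ici (0 : ℝ)))
    (hstrict : StrictMonoOn Φ (Set.Ici (0 : ℝ)))
    (hca : ∀ X : Ω → ℝ, MemLinftyPlus P X → ∀ h : ℝ, 0 ≤ h →
      orliczPremium P Φ (fun ω => X ω + h) = orliczPremium P Φ X + h) :
    ∀ u v l : ℝ, 1 < u → 0 ≤ v → v < 1 → 0 < l → l < 1 →
      l * (Φ u).toReal + (1 - l) * (Φ v).toReal = 1 → ∀ h : ℝ, 0 ≤ h →
      l * (Φ ((u + h) / (1 + h))).toReal
        + (1 - l) * (Φ ((v + h) / (1 + h))).toReal = 1 := by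
  intro u v l hu hv0 hv1 hl0 hl1 hbase h hh
  obtain ⟨A, hA, hPA⟩ := hP l hl0.le hl1.le
  have hmem : MemLinftyPlus P (fun ω => if ω ∈ A then u else v) := by
    refine ⟨Measurable.ite hA measurable_const measurable_const, ?_, ⟨u, ?_⟩⟩
    · exact ae_of_all _ fun ω => by
        by_cases hω : ω ∈ A <;> simp only [hω, if_true, if_false] <;> linarith
    · exact ae_of_all _ fun ω => by
        by_cases hω : ω ∈ A <;> simp only [hω, if_true, if_false] <;> linarith
  have hroot1 : l * (Φ (u / 1)).toReal + (1 - l) * (Φ (v / 1)).toReal = 1 := by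
    rw [div_one, div_one]; exact hbase
  have hprem1 : orliczPremium P Φ (fun ω => if ω ∈ A then u else v) = 1 :=
    bin_premium_eq P Φ hΦ hfin hstrict hA hl0 hl1 hPA hv0 (by linarith)
      (by linarith) one_pos hroot1
  have hca' := hca _ hmem h hh
  rw [hprem1] at hca'
  rw [show (fun ω => (fun ω => if ω ∈ A then u else v) ω + h)
      = fun ω => if ω ∈ A then u + h else v + h by
    funext ω; by_cases hω : ω ∈ A <;> simp [hω]] at hca'
  exact bin_root_of_premium P Φ hΦ hfin hcont hA hl0 hl1 hPA
    (by linarith : (0:ℝ) ≤ v + h) (by linarith : v + h ≤ u + h)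
    (by linarith : (0:ℝ) < u + h) (by linarith : (0:ℝ) < 1 + h) hca'

/-- on a nonatomic probability space, if `Φ` is finite, continuous and
strictly increasing and `H_Φ` is cash-additive, then
`Φ(x) = 1 + a((x-1)₊)^p - b((x-1)₋)^p` for some `a, b > 0`, `p ≥ 0`. -/
theorem orliczPremium_cashAdditive_collapse
    (P : Measure Ω) [IsProbabilityMeasure P]
    (hP : ∀ p : ℝ, 0 ≤ p → p ≤ 1 →
      ∃ A : Set Ω, MeasurableSet A ∧ P A = ENNReal.ofReal p)
    (Φ : ℝ → EReal) (hΦ : IsOrliczFunction Φ)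
    (hfin : ∀ x : ℝ, 0 ≤ x → Φ x ≠ ⊥ ∧ Φ x ≠ ⊤)
    (hcont : ContinuousOn Φ (Set.Ici (0 : ℝ)))
    (hstrict : StrictMonoOn Φ (Set.Ici (0 : ℝ)))
    (hca : ∀ X : Ω → ℝ, MemLinftyPlus P X → ∀ h : ℝ, 0 ≤ h →
      orliczPremium P Φ (fun ω => X ω + h) = orliczPremium P Φ X + h) :
    ∃ a b p : ℝ, 0 < a ∧ 0 < b ∧ 0 ≤ p ∧
      ∀ x : ℝ, 0 ≤ x →
        Φ x = ((1 + a * (max (x - 1) 0) ^ p - b * (max (1 - x) 0) ^ p : ℝ) : EReal) := by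
  have hφ1 : ((Φ 1).toReal) = 1 := by
    rw [Phi_one_eq_one hΦ hcont]; simp
  obtain ⟨a, b, p, ha, hb, hp, hform⟩ := real_collapse (fun x => (Φ x).toReal)
    (phi_strictMonoOn hfin hstrict) hφ1
    (key_functional P hP Φ hΦ hfin hcont hstrict hca)
  refine ⟨a, b, p, ha, hb, hp.le, fun x hx => ?_⟩
  rw [← phi_coe hfin hx]
  exact EReal.coe_eq_coe_iff.2 (hform x hx)
end
end

section
/- Let (Ω, F, P) be a probability space and let ρ : L∞₊ → [0,∞] be monotone (X ≤ Y P-a.s. implies ρ(X) ≤ ρ(Y)), positively homogeneous (ρ(λX) = λ·ρ(X) for all λ ≥ 0) and convex (ρ(αX + (1−α)Y) ≤ α·ρ(X) + (1−α)·ρ(Y) for α ∈ (0,1)). Then ρ is GG-convex: for all X, Y ∈ L∞₊ and λ ∈ (0,1), ρ(X^λ · Y^{1−λ}) ≤ ρ(X)^λ · ρ(Y)^{1−λ}. -/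
open MeasureTheory Filter Set
open scoped ENNReal

noncomputable section

variable {Ω : Type*} [MeasurableSpace Ω]

lemma aux_pointwise {x y l t s : ℝ} (hx : 0 ≤ x) (hy : 0 ≤ y)
    (hl0 : 0 < l) (hl1 : l < 1) (ht : 0 < t) (hs : 0 < s)
    (hts : 1 ≤ t ^ l * s ^ (1 - l)) :
    x ^ l * y ^ (1 - l) ≤ l * (t * x) + (1 - l) * (s * y) := by
  have hg : (0:ℝ) ≤ x ^ l * y ^ (1 - l) := by positivity
  have h1 : x ^ l * y ^ (1 - l) ≤ (t * x) ^ l * (s * y) ^ (1 - l) := by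
    calc x ^ l * y ^ (1-l) = x ^ l * y ^ (1-l) * 1 := by ring
    _ ≤ x ^ l * y ^ (1-l) * (t ^ l * s ^ (1-l)) := mul_le_mul_of_nonneg_left hts hg
    _ = (t*x)^l * (s*y)^(1-l) := by
        rw [Real.mul_rpow ht.le hx, Real.mul_rpow hs.le hy]; ring
  exact h1.trans (Real.geom_mean_le_arith_mean2_weighted hl0.le (by linarith)
    (by positivity) (by positivity) (by ring))

lemma mem_geom {P : Measure Ω} {X Y : Ω → ℝ} {l : ℝ}
    (hX : MemLinftyPlus P X) (hY : MemLinftyPlus P Y) (hl0 : 0 < l) (hl1 : l < 1) :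
    MemLinftyPlus P (fun ω => X ω ^ l * Y ω ^ (1 - l)) := by
  obtain ⟨mX, nX, CX, bX⟩ := hX
  obtain ⟨mY, nY, CY, bY⟩ := hY
  refine ⟨((Real.continuous_rpow_const hl0.le).measurable.comp mX).mul
      ((Real.continuous_rpow_const (by linarith : (0:ℝ) ≤ 1 - l)).measurable.comp mY),
    ?_, (max CX 0) ^ l * (max CY 0) ^ (1 - l), ?_⟩
  · filter_upwards [nX, nY] with ω h1 h2
    exact mul_nonneg (Real.rpow_nonneg h1 l) (Real.rpow_nonneg h2 (1-l))
  · filter_upwards [nX, nY, bX, bY] with ω h1 h2 h3 h4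
    exact mul_le_mul (Real.rpow_le_rpow h1 (h3.trans (le_max_left _ _)) hl0.le)
      (Real.rpow_le_rpow h2 (h4.trans (le_max_left _ _)) (by linarith))
      (Real.rpow_nonneg h2 _) (Real.rpow_nonneg (le_max_right _ _) _)

lemma mem_smul {P : Measure Ω} {X : Ω → ℝ} {t : ℝ}
    (hX : MemLinftyPlus P X) (ht : 0 ≤ t) : MemLinftyPlus P (fun ω => t * X ω) := by
  obtain ⟨mX, nX, CX, bX⟩ := hX
  refine ⟨measurable_const.mul mX, ?_, t * CX, ?_⟩
  · filter_upwards [nX] with ω h; exact mul_nonneg ht h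
  · filter_upwards [bX] with ω h; exact mul_le_mul_of_nonneg_left h ht

lemma mem_combo {P : Measure Ω} {X Y : Ω → ℝ} {a b : ℝ}
    (hX : MemLinftyPlus P X) (hY : MemLinftyPlus P Y) (ha : 0 ≤ a) (hb : 0 ≤ b) :
    MemLinftyPlus P (fun ω => a * X ω + b * Y ω) := by
  obtain ⟨mX, nX, CX, bX⟩ := hX
  obtain ⟨mY, nY, CY, bY⟩ := hY
  refine ⟨(measurable_const.mul mX).add (measurable_const.mul mY), ?_, a * CX + b * CY, ?_⟩
  · filter_upwards [nX, nY] with ω h1 h2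
    exact add_nonneg (mul_nonneg ha h1) (mul_nonneg hb h2)
  · filter_upwards [bX, bY] with ω h1 h2
    exact add_le_add (mul_le_mul_of_nonneg_left h1 ha) (mul_le_mul_of_nonneg_left h2 hb)

lemma gmulE_eq_top {a b : ℝ≥0∞} (h : a = ⊤ ∨ b = ⊤) : gmulE a b = ⊤ := by
  rcases h with rfl | rfl
  · by_cases hb : b = 0
    · simp [gmulE, hb]
    · simp [gmulE, hb, ENNReal.top_mul hb]
  · by_cases ha : a = 0
    · simp [gmulE, ha]
    · simp [gmulE, ha, ENNReal.mul_top ha]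

lemma key_estimate (P : Measure Ω) [IsProbabilityMeasure P] (ρ : (Ω → ℝ) → ℝ≥0∞)
    (hmono : ∀ X Y : Ω → ℝ, MemLinftyPlus P X → MemLinftyPlus P Y →
      (∀ᵐ ω ∂P, X ω ≤ Y ω) → ρ X ≤ ρ Y)
    (hhom : ∀ X : Ω → ℝ, MemLinftyPlus P X → ∀ l : ℝ, 0 ≤ l →
      ρ (fun ω => l * X ω) = ENNReal.ofReal l * ρ X)
    (hconv : ∀ X Y : Ω → ℝ, MemLinftyPlus P X → MemLinftyPlus P Y →
      ∀ a ∈ Set.Ioo (0 : ℝ) 1,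
        ρ (fun ω => a * X ω + (1 - a) * Y ω) ≤
          ENNReal.ofReal a * ρ X + ENNReal.ofReal (1 - a) * ρ Y)
    {X Y : Ω → ℝ} (hX : MemLinftyPlus P X) (hY : MemLinftyPlus P Y)
    {l : ℝ} (hl0 : 0 < l) (hl1 : l < 1) {t s : ℝ} (ht : 0 < t) (hs : 0 < s)
    (hts : 1 ≤ t ^ l * s ^ (1 - l)) :
    ρ (fun ω => X ω ^ l * Y ω ^ (1 - l)) ≤
      ENNReal.ofReal (l * t) * ρ X + ENNReal.ofReal ((1 - l) * s) * ρ Y := by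
  have memtX := mem_smul hX ht.le
  have memsY := mem_smul hY hs.le
  have step1 : ρ (fun ω => X ω ^ l * Y ω ^ (1 - l)) ≤
      ρ (fun ω => l * (t * X ω) + (1 - l) * (s * Y ω)) := by
    refine hmono _ _ (mem_geom hX hY hl0 hl1) (mem_combo memtX memsY hl0.le (by linarith)) ?_
    filter_upwards [hX.2.1, hY.2.1] with ω h1 h2
    exact aux_pointwise h1 h2 hl0 hl1 ht hs hts
  have step2 := hconv _ _ memtX memsY l ⟨hl0, hl1⟩
  have e1 : ρ (fun ω => t * X ω) = ENNReal.ofReal t * ρ X := hhom X hX t ht.le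
  have e2 : ρ (fun ω => s * Y ω) = ENNReal.ofReal s * ρ Y := hhom Y hY s hs.le
  calc ρ (fun ω => X ω ^ l * Y ω ^ (1 - l)) ≤ _ := step1
    _ ≤ ENNReal.ofReal l * ρ (fun ω => t * X ω)
        + ENNReal.ofReal (1 - l) * ρ (fun ω => s * Y ω) := step2
    _ = ENNReal.ofReal (l * t) * ρ X + ENNReal.ofReal ((1 - l) * s) * ρ Y := by
        rw [e1, e2, ENNReal.ofReal_mul hl0.le, ENNReal.ofReal_mul (by linarith : (0:ℝ) ≤ 1 - l),
          mul_assoc, mul_assoc]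

lemma zero_case (P : Measure Ω) [IsProbabilityMeasure P] (ρ : (Ω → ℝ) → ℝ≥0∞)
    (hmono : ∀ X Y : Ω → ℝ, MemLinftyPlus P X → MemLinftyPlus P Y →
      (∀ᵐ ω ∂P, X ω ≤ Y ω) → ρ X ≤ ρ Y)
    (hhom : ∀ X : Ω → ℝ, MemLinftyPlus P X → ∀ l : ℝ, 0 ≤ l →
      ρ (fun ω => l * X ω) = ENNReal.ofReal l * ρ X)
    (hconv : ∀ X Y : Ω → ℝ, MemLinftyPlus P X → MemLinftyPlus P Y →
      ∀ a ∈ Set.Ioo (0 : ℝ) 1,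
        ρ (fun ω => a * X ω + (1 - a) * Y ω) ≤
          ENNReal.ofReal a * ρ X + ENNReal.ofReal (1 - a) * ρ Y)
    {X Y : Ω → ℝ} (hX : MemLinftyPlus P X) (hY : MemLinftyPlus P Y)
    {l : ℝ} (hl0 : 0 < l) (hl1 : l < 1) (hX0 : ρ X = 0) (hYt : ρ Y ≠ ⊤) :
    ρ (fun ω => X ω ^ l * Y ω ^ (1 - l)) = 0 := by
  refine le_antisymm ?_ zero_le
  refine ENNReal.le_of_forall_pos_le_add fun ε hε _ => ?_
  rw [zero_add]
  set y := (ρ Y).toReal with hydef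
  have hy0 : 0 ≤ y := ENNReal.toReal_nonneg
  have hl1' : (0:ℝ) < 1 - l := by linarith
  have hε' : (0:ℝ) < (ε:ℝ) := hε
  have hs : (0:ℝ) < (ε:ℝ) / ((1-l)*(y+1)) := by positivity
  set s := (ε:ℝ) / ((1-l)*(y+1)) with hsdef
  set t := s ^ ((l-1)/l) with htdef
  have ht : 0 < t := Real.rpow_pos_of_pos hs _
  have hcon : t ^ l * s ^ (1 - l) = 1 := by
    rw [htdef, ← Real.rpow_mul hs.le, ← Real.rpow_add hs]
    have h0 : (l-1)/l * l + (1-l) = 0 := by field_simp; ring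
    rw [h0, Real.rpow_zero]
  have hkey := key_estimate P ρ hmono hhom hconv hX hY hl0 hl1 ht hs hcon.ge
  rw [hX0, mul_zero, zero_add] at hkey
  have hYe : ρ Y = ENNReal.ofReal y := (ENNReal.ofReal_toReal hYt).symm
  have hval : (1-l) * s * y ≤ (ε:ℝ) := by
    have hq : (1-l) * s * y = (ε:ℝ) * (y / (y+1)) := by
      rw [hsdef]; field_simp
    rw [hq]
    calc (ε:ℝ) * (y/(y+1)) ≤ (ε:ℝ) * 1 := by
          apply mul_le_mul_of_nonneg_left _ hε'.le
          rw [div_le_one (by linarith)]; linarith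
      _ = (ε:ℝ) := mul_one _
  calc ρ (fun ω => X ω ^ l * Y ω ^ (1 - l))
      ≤ ENNReal.ofReal ((1 - l) * s) * ρ Y := hkey
    _ = ENNReal.ofReal ((1-l) * s * y) := by
        rw [hYe, ← ENNReal.ofReal_mul (by positivity)]
    _ ≤ ENNReal.ofReal (ε:ℝ) := ENNReal.ofReal_le_ofReal hval
    _ = (ε : ℝ≥0∞) := ENNReal.ofReal_coe_nnreal

/-- a monotone, positively homogeneous and convex functional
`ρ : L∞₊ → [0,∞]` is GG-convex (with the convention `0 ⬝ ∞ = ∞`). -/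
theorem ggConvex_of_monotone_posHom_convex
    (P : Measure Ω) [IsProbabilityMeasure P] (ρ : (Ω → ℝ) → ℝ≥0∞)
    (hmono : ∀ X Y : Ω → ℝ, MemLinftyPlus P X → MemLinftyPlus P Y →
      (∀ᵐ ω ∂P, X ω ≤ Y ω) → ρ X ≤ ρ Y)
    (hhom : ∀ X : Ω → ℝ, MemLinftyPlus P X → ∀ l : ℝ, 0 ≤ l →
      ρ (fun ω => l * X ω) = ENNReal.ofReal l * ρ X)
    (hconv : ∀ X Y : Ω → ℝ, MemLinftyPlus P X → MemLinftyPlus P Y →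
      ∀ a ∈ Set.Ioo (0 : ℝ) 1,
        ρ (fun ω => a * X ω + (1 - a) * Y ω) ≤
          ENNReal.ofReal a * ρ X + ENNReal.ofReal (1 - a) * ρ Y) :
    ∀ X Y : Ω → ℝ, MemLinftyPlus P X → MemLinftyPlus P Y →
      ∀ l ∈ Set.Ioo (0 : ℝ) 1,
        ρ (fun ω => X ω ^ l * Y ω ^ (1 - l)) ≤
          gmulE (ρ X ^ l) (ρ Y ^ (1 - l)) := by
  intro X Y hX hY l hl
  obtain ⟨hl0, hl1⟩ := hl
  by_cases hXt : ρ X = ⊤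
  · rw [gmulE_eq_top (Or.inl (by rw [hXt]; exact ENNReal.top_rpow_of_pos hl0))]
    exact le_top
  by_cases hYt : ρ Y = ⊤
  · rw [gmulE_eq_top (Or.inr (by rw [hYt]; exact ENNReal.top_rpow_of_pos (by linarith)))]
    exact le_top
  by_cases hX0 : ρ X = 0
  · rw [zero_case P ρ hmono hhom hconv hX hY hl0 hl1 hX0 hYt]
    exact zero_le
  by_cases hY0 : ρ Y = 0
  · have hfe : (fun ω => X ω ^ l * Y ω ^ (1 - l))
        = (fun ω => Y ω ^ (1 - l) * X ω ^ (1 - (1 - l))) := by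
      funext ω; rw [sub_sub_cancel]; ring
    rw [hfe, zero_case P ρ hmono hhom hconv hY hX (by linarith) (by linarith) hY0 hXt]
    exact zero_le
  have hx : 0 < (ρ X).toReal := ENNReal.toReal_pos hX0 hXt
  have hy : 0 < (ρ Y).toReal := ENNReal.toReal_pos hY0 hYt
  set x := (ρ X).toReal with hxdef
  set y := (ρ Y).toReal with hydef
  set t := (y/x) ^ (1-l) with htdef
  set s := (x/y) ^ l with hsdef
  have ht : 0 < t := Real.rpow_pos_of_pos (by positivity) _
  have hs : 0 < s := Real.rpow_pos_of_pos (by positivity) _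
  have hcon : t ^ l * s ^ (1-l) = 1 := by
    rw [htdef, hsdef, ← Real.rpow_mul (by positivity), ← Real.rpow_mul (by positivity),
      mul_comm l (1-l), ← Real.mul_rpow (by positivity) (by positivity)]
    have h1 : y/x * (x/y) = 1 := by field_simp
    rw [h1, Real.one_rpow]
  have hkey := key_estimate P ρ hmono hhom hconv hX hY hl0 hl1 ht hs hcon.ge
  have hXe : ρ X = ENNReal.ofReal x := (ENNReal.ofReal_toReal hXt).symm
  have hYe : ρ Y = ENNReal.ofReal y := (ENNReal.ofReal_toReal hYt).symm
  have hxx : x ^ l * x ^ (1-l) = x := by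
    rw [← Real.rpow_add hx]; norm_num
  have hyy : y ^ (1-l) * y ^ l = y := by
    rw [← Real.rpow_add hy]; norm_num
  have e1 : t * x = x ^ l * y ^ (1-l) := by
    rw [htdef, Real.div_rpow hy.le hx.le, div_mul_eq_mul_div,
      div_eq_iff (Real.rpow_pos_of_pos hx (1-l)).ne']
    linear_combination (-(y ^ (1-l))) * hxx
  have e2 : s * y = x ^ l * y ^ (1-l) := by
    rw [hsdef, Real.div_rpow hx.le hy.le, div_mul_eq_mul_div,
      div_eq_iff (Real.rpow_pos_of_pos hy l).ne']
    linear_combination (-(x ^ l)) * hyy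
  have harith : l * t * x + (1-l) * s * y = x ^ l * y ^ (1-l) := by
    rw [mul_assoc, e1, mul_assoc, e2]; ring
  have hRHS : gmulE (ρ X ^ l) (ρ Y ^ (1-l)) = ENNReal.ofReal (x ^ l * y ^ (1-l)) := by
    rw [hXe, hYe, ENNReal.ofReal_rpow_of_pos hx, ENNReal.ofReal_rpow_of_pos hy]
    unfold gmulE
    rw [if_neg, ← ENNReal.ofReal_mul (by positivity)]
    rintro (⟨_, h⟩ | ⟨h, _⟩) <;> exact ENNReal.ofReal_ne_top h
  calc ρ (fun ω => X ω ^ l * Y ω ^ (1-l)) ≤ _ := hkey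
    _ = ENNReal.ofReal (x ^ l * y ^ (1-l)) := by
        rw [hXe, hYe, ← ENNReal.ofReal_mul (by positivity : (0:ℝ) ≤ l * t),
          ← ENNReal.ofReal_mul (mul_nonneg (by linarith) hs.le),
          ← ENNReal.ofReal_add (by positivity) (mul_nonneg (mul_nonneg (by linarith) hs.le) hy.le),
          harith]
    _ = gmulE (ρ X ^ l) (ρ Y ^ (1-l)) := hRHS.symm
end
end

section
/- Let Φ be an Orlicz function and H_Φ the associated Orlicz premium on L∞₊. If Φ is GA-convex, then H_Φ is GG-convex: for all X, Y ∈ L∞₊ and λ ∈ (0,1), H_Φ(X^λ · Y^{1−λ}) ≤ H_Φ(X)^λ · H_Φ(Y)^{1−λ}. -/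
open MeasureTheory Filter Set
open scoped ENNReal

noncomputable section

variable {Ω : Type*} [MeasurableSpace Ω]

namespace OrliczAux

lemma e_coe (x : ℝ) : erealToENNReal x = ENNReal.ofReal x := by
  rw [erealToENNReal, if_neg (by simp)]; simp

lemma e_ne_top {x : EReal} (h : x ≠ ⊤) : erealToENNReal x ≠ ⊤ := by
  rw [erealToENNReal, if_neg h]; simp

lemma e_mono : Monotone erealToENNReal := by
  intro x y hxy
  by_cases hy : y = ⊤
  · simp [hy, erealToENNReal]
  by_cases hx : x = ⊤
  · exact absurd (hx ▸ hxy) (by simpa using hy)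
  rw [erealToENNReal, if_neg hx, erealToENNReal, if_neg hy]
  by_cases hxb : x = ⊥
  · simp [hxb]
  exact ENNReal.ofReal_le_ofReal (EReal.toReal_le_toReal hxy hxb hy)

lemma e_measurable : Measurable erealToENNReal := e_mono.measurable

lemma e_one : erealToENNReal 1 = 1 := by
  rw [show (1 : EReal) = ((1:ℝ) : EReal) by simp, e_coe]; simp

lemma eexp_mono {P : Measure Ω} {f g : Ω → EReal} (h : ∀ᵐ ω ∂P, f ω ≤ g ω) :
    eexp P f ≤ eexp P g := by
  refine EReal.sub_le_sub ?_ ?_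
  · exact EReal.coe_ennreal_le_coe_ennreal_iff.mpr <|
      lintegral_mono_ae (h.mono fun ω hω => e_mono hω)
  · exact EReal.coe_ennreal_le_coe_ennreal_iff.mpr <|
      lintegral_mono_ae (h.mono fun ω hω => e_mono (EReal.neg_le_neg_iff.mpr hω))

lemma eexp_le_of_pos_le {P : Measure Ω} {f : Ω → EReal} {c : ℝ≥0∞}
    (h : (∫⁻ ω, erealToENNReal (f ω) ∂P) ≤ c) : eexp P f ≤ (c : EReal) := by
  calc eexp P f ≤ ((∫⁻ ω, erealToENNReal (f ω) ∂P : ℝ≥0∞) : EReal) - 0 := by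
        exact EReal.sub_le_sub le_rfl (EReal.coe_ennreal_nonneg _)
    _ ≤ (c : EReal) := by
        rw [sub_zero]; exact EReal.coe_ennreal_le_coe_ennreal_iff.mpr h

lemma eexp_le_one_of_ae {P : Measure Ω} [IsProbabilityMeasure P] {f : Ω → EReal}
    (h : ∀ᵐ ω ∂P, f ω ≤ 1) : eexp P f ≤ 1 := by
  have : (∫⁻ ω, erealToENNReal (f ω) ∂P) ≤ 1 := by
    calc (∫⁻ ω, erealToENNReal (f ω) ∂P) ≤ ∫⁻ _, 1 ∂P :=
          lintegral_mono_ae (h.mono fun ω hω => by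
            simpa [e_one] using e_mono hω)
      _ = 1 := by simp
  simpa using eexp_le_of_pos_le this

lemma eexp_bot_of_neg_top {P : Measure Ω} {f : Ω → EReal}
    (h : (∫⁻ ω, erealToENNReal (-(f ω)) ∂P) = ⊤) : eexp P f = ⊥ := by
  rw [eexp, h]; simp


lemma phi_meas {Φ : ℝ → EReal} (hΦ : IsOrliczFunction Φ) :
    Measurable (fun t : ℝ => Φ (max t 0)) := by
  have : Monotone (fun t : ℝ => Φ (max t 0)) := fun a b hab =>
    hΦ.mono _ _ (le_max_right _ _) (max_le_max hab le_rfl)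
  exact this.measurable

lemma phi_comp_aemeas {P : Measure Ω} {Φ : ℝ → EReal} (hΦ : IsOrliczFunction Φ)
    {W : Ω → ℝ} (hW : Measurable W) (hW0 : ∀ᵐ ω ∂P, 0 ≤ W ω) :
    AEMeasurable (fun ω => Φ (W ω)) P := by
  refine ⟨fun ω => Φ (max (W ω) 0), (phi_meas hΦ).comp hW, ?_⟩
  filter_upwards [hW0] with ω hω
  simp [max_eq_left hω]

/-- The constraint set of the Orlicz premium. -/
def S (P : Measure Ω) (Φ : ℝ → EReal) (X : Ω → ℝ) : Set ℝ :=
  {k : ℝ | 0 < k ∧ eexp P (fun ω => Φ (X ω / k)) ≤ 1}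

lemma S_mono {P : Measure Ω} {Φ : ℝ → EReal} (hΦ : IsOrliczFunction Φ)
    {X : Ω → ℝ} (hX0 : ∀ᵐ ω ∂P, 0 ≤ X ω) {k k' : ℝ}
    (hk : k ∈ S P Φ X) (hkk' : k ≤ k') : k' ∈ S P Φ X := by
  obtain ⟨hkpos, hkle⟩ := hk
  refine ⟨hkpos.trans_le hkk', le_trans (eexp_mono ?_) hkle⟩
  filter_upwards [hX0] with ω hω
  exact hΦ.mono _ _ (div_nonneg hω (hkpos.trans_le hkk').le)
    (div_le_div_of_nonneg_left hω hkpos hkk')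

lemma mem_S_of_large {P : Measure Ω} [IsProbabilityMeasure P] {Φ : ℝ → EReal}
    (hΦ : IsOrliczFunction Φ) {X : Ω → ℝ} {C : ℝ}
    (hX0 : ∀ᵐ ω ∂P, 0 ≤ X ω) (hXC : ∀ᵐ ω ∂P, X ω ≤ C) :
    max C 1 ∈ S P Φ X := by
  have hk : (0:ℝ) < max C 1 := lt_of_lt_of_le one_pos (le_max_right _ _)
  refine ⟨hk, eexp_le_one_of_ae ?_⟩
  filter_upwards [hX0, hXC] with ω h0 hC
  refine le_trans (hΦ.mono _ _ (div_nonneg h0 hk.le) ?_) (hΦ.le_one 1 zero_le_one le_rfl)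
  rw [div_le_one hk]
  exact le_trans hC (le_max_left _ _)

lemma S_nonempty {P : Measure Ω} [IsProbabilityMeasure P] {Φ : ℝ → EReal}
    (hΦ : IsOrliczFunction Φ) {X : Ω → ℝ} (hX : MemLinftyPlus P X) :
    (S P Φ X).Nonempty := by
  obtain ⟨C, hC⟩ := hX.2.2
  exact ⟨max C 1, mem_S_of_large hΦ hX.2.1 hC⟩

lemma S_bddBelow {P : Measure Ω} {Φ : ℝ → EReal} {X : Ω → ℝ} :
    BddBelow (S P Φ X) := ⟨0, fun k hk => hk.1.le⟩

lemma mem_S_of_sInf_lt {P : Measure Ω} [IsProbabilityMeasure P] {Φ : ℝ → EReal}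
    (hΦ : IsOrliczFunction Φ) {X : Ω → ℝ} (hX : MemLinftyPlus P X) {k : ℝ}
    (hk : sInf (S P Φ X) < k) : k ∈ S P Φ X := by
  obtain ⟨k0, hk0, hk0k⟩ := (csInf_lt_iff S_bddBelow (S_nonempty hΦ hX)).mp hk
  exact S_mono hΦ hX.2.1 hk0 hk0k.le

lemma orliczPremium_nonneg (P : Measure Ω) (Φ : ℝ → EReal) (X : Ω → ℝ) :
    0 ≤ orliczPremium P Φ X := by
  rw [orliczPremium]
  split
  · exact le_rfl
  · exact Real.sInf_nonneg (fun k hk => hk.1.le)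
lemma ofReal_max (x : ℝ) : ENNReal.ofReal x = ENNReal.ofReal (max x 0) := by
  rcases le_total x 0 with h | h
  · rw [ENNReal.ofReal_of_nonpos h, max_eq_right h]; simp
  · rw [max_eq_left h]

lemma max_identity (x : ℝ) : max x 0 = x + max (-x) 0 := by
  rcases le_total x 0 with h | h
  · rw [max_eq_right h, max_eq_left (by linarith)]; ring
  · rw [max_eq_left h, max_eq_right (by linarith)]; ring

lemma e_top_of_ne_zero {r : ℝ≥0∞} (hr : r ≠ 0) : r * (⊤:ℝ≥0∞) = ⊤ :=
  ENNReal.mul_top hr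

lemma pointwise_convex {l : ℝ} (hl : l ∈ Set.Ioo (0:ℝ) 1) {a b c : EReal}
    (ha : a ≠ ⊥) (hb : b ≠ ⊥) (hc : c ≤ (l : EReal) * a + ((1 - l : ℝ) : EReal) * b) :
    erealToENNReal c + ENNReal.ofReal l * erealToENNReal (-a)
        + ENNReal.ofReal (1-l) * erealToENNReal (-b)
      ≤ ENNReal.ofReal l * erealToENNReal a + ENNReal.ofReal (1-l) * erealToENNReal b
        + erealToENNReal (-c) := by
  have hl0 : (0:ℝ) < l := hl.1
  have hl1 : (0:ℝ) < 1 - l := by linarith [hl.2]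
  by_cases hat : a = ⊤
  · have : ENNReal.ofReal l * erealToENNReal a = ⊤ := by
      rw [hat, erealToENNReal, if_pos rfl]
      exact e_top_of_ne_zero (by simpa using hl0)
    simp [this]
  by_cases hbt : b = ⊤
  · have : ENNReal.ofReal (1-l) * erealToENNReal b = ⊤ := by
      rw [hbt, erealToENNReal, if_pos rfl]
      exact e_top_of_ne_zero (by simpa using hl1)
    simp [this]
  by_cases hcb : c = ⊥
  · have : erealToENNReal (-c) = ⊤ := by rw [hcb]; simp [erealToENNReal]
    simp [this]
  -- now a b finite, c ≠ ⊥; show c ≠ ⊤ as well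
  lift a to ℝ using ⟨hat, ha⟩ with a'
  lift b to ℝ using ⟨hbt, hb⟩ with b'
  have hcoe : (l : EReal) * (a' : EReal) + ((1 - l : ℝ) : EReal) * (b' : EReal)
      = ((l * a' + (1-l) * b' : ℝ) : EReal) := by
    rw [← EReal.coe_mul, ← EReal.coe_mul, ← EReal.coe_add]
  rw [hcoe] at hc
  have hct : c ≠ ⊤ := fun h => by rw [h] at hc; exact (EReal.coe_lt_top _).not_ge hc
  lift c to ℝ using ⟨hct, hcb⟩ with c'
  rw [EReal.coe_le_coe_iff] at hc
  rw [← EReal.coe_neg, ← EReal.coe_neg, ← EReal.coe_neg, e_coe, e_coe, e_coe, e_coe,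
    e_coe, e_coe]
  have key : max c' 0 + l * max (-a') 0 + (1-l) * max (-b') 0
      ≤ l * max a' 0 + (1-l) * max b' 0 + max (-c') 0 := by
    have ia := max_identity a'
    have ib := max_identity b'
    have ic := max_identity c'
    nlinarith [ia, ib, ic, hc]
  calc ENNReal.ofReal c' + ENNReal.ofReal l * ENNReal.ofReal (-a')
        + ENNReal.ofReal (1-l) * ENNReal.ofReal (-b')
      = ENNReal.ofReal (max c' 0 + l * max (-a') 0 + (1-l) * max (-b') 0) := by
        rw [ENNReal.ofReal_add (by positivity) (by positivity),
          ENNReal.ofReal_add (by positivity) (by positivity),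
          ENNReal.ofReal_mul hl0.le, ENNReal.ofReal_mul hl1.le,
          ← ofReal_max c', ← ofReal_max (-a'), ← ofReal_max (-b')]
    _ ≤ ENNReal.ofReal (l * max a' 0 + (1-l) * max b' 0 + max (-c') 0) :=
        ENNReal.ofReal_le_ofReal key
    _ = ENNReal.ofReal l * ENNReal.ofReal a' + ENNReal.ofReal (1-l) * ENNReal.ofReal b'
        + ENNReal.ofReal (-c') := by
        rw [ENNReal.ofReal_add (by positivity) (by positivity),
          ENNReal.ofReal_add (by positivity) (by positivity),
          ENNReal.ofReal_mul hl0.le, ENNReal.ofReal_mul hl1.le,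
          ← ofReal_max a', ← ofReal_max b', ← ofReal_max (-c')]
lemma coe_ennreal_eq_coe_toReal {B : ℝ≥0∞} (hB : B ≠ ⊤) :
    (B : EReal) = ((B.toReal : ℝ) : EReal) := by
  rw [show (B:EReal) = ((ENNReal.ofReal B.toReal : ℝ≥0∞) : EReal) by
      rw [ENNReal.ofReal_toReal hB],
    EReal.coe_ennreal_ofReal, max_eq_left ENNReal.toReal_nonneg]

lemma pos_le_one_add_neg {A B : ℝ≥0∞} (hB : B ≠ ⊤)
    (h : (A:EReal) - (B:EReal) ≤ 1) : A ≤ 1 + B := by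
  by_cases hA : A = ⊤
  · rw [hA, EReal.coe_ennreal_top, coe_ennreal_eq_coe_toReal hB, EReal.top_sub_coe] at h
    norm_num at h
    exact absurd h (EReal.coe_one ▸ EReal.coe_ne_top 1)
  · rw [coe_ennreal_eq_coe_toReal hA, coe_ennreal_eq_coe_toReal hB, ← EReal.coe_sub] at h
    have h' : A.toReal - B.toReal ≤ 1 := by exact_mod_cast h
    rw [← ENNReal.ofReal_toReal hA, ← ENNReal.ofReal_toReal hB, ← ENNReal.ofReal_one,
      ← ENNReal.ofReal_add (by norm_num) ENNReal.toReal_nonneg]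
    exact ENNReal.ofReal_le_ofReal (by linarith)

lemma sub_le_one_of_pos_le {A B : ℝ≥0∞} (h : A ≤ 1 + B) :
    (A:EReal) - (B:EReal) ≤ 1 := by
  by_cases hB : B = ⊤
  · rw [hB]; simp
  · have hA : A ≠ ⊤ := by
      intro hA
      rw [hA] at h
      exact (ENNReal.add_ne_top.mpr ⟨ENNReal.one_ne_top, hB⟩) (top_le_iff.mp h)
    have h1B : (1:ℝ≥0∞) + B ≠ ⊤ := ENNReal.add_ne_top.mpr ⟨ENNReal.one_ne_top, hB⟩
    have h' : A.toReal ≤ (1 + B).toReal := (ENNReal.toReal_le_toReal hA h1B).mpr h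
    rw [ENNReal.toReal_add ENNReal.one_ne_top hB, ENNReal.toReal_one] at h'
    rw [coe_ennreal_eq_coe_toReal hA, coe_ennreal_eq_coe_toReal hB, ← EReal.coe_sub]
    exact_mod_cast (by linarith : A.toReal - B.toReal ≤ (1:ℝ))

lemma eexp_le_one_of_convex_bound {P : Measure Ω} [IsProbabilityMeasure P]
    {l : ℝ} (hl : l ∈ Set.Ioo (0:ℝ) 1) {f g h : Ω → EReal}
    (hfm : AEMeasurable (fun ω => erealToENNReal (-(f ω))) P)
    (hgm : AEMeasurable (fun ω => erealToENNReal (-(g ω))) P)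
    (hgp : AEMeasurable (fun ω => erealToENNReal (g ω)) P)
    (hhm : AEMeasurable (fun ω => erealToENNReal (-(h ω))) P)
    (hfb : ∀ᵐ ω ∂P, f ω ≠ ⊥) (hgb : ∀ᵐ ω ∂P, g ω ≠ ⊥)
    (hptw : ∀ᵐ ω ∂P, h ω ≤ (l : EReal) * f ω + ((1 - l : ℝ) : EReal) * g ω)
    (hf : eexp P f ≤ 1) (hg : eexp P g ≤ 1)
    (hBf : (∫⁻ ω, erealToENNReal (-(f ω)) ∂P) ≠ ⊤)
    (hBg : (∫⁻ ω, erealToENNReal (-(g ω)) ∂P) ≠ ⊤) :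
    eexp P h ≤ 1 := by
  set Af := ∫⁻ ω, erealToENNReal (f ω) ∂P with hAf
  set Bf := ∫⁻ ω, erealToENNReal (-(f ω)) ∂P with hBf'
  set Ag := ∫⁻ ω, erealToENNReal (g ω) ∂P with hAg
  set Bg := ∫⁻ ω, erealToENNReal (-(g ω)) ∂P with hBg'
  set Ah := ∫⁻ ω, erealToENNReal (h ω) ∂P with hAh
  set Bh := ∫⁻ ω, erealToENNReal (-(h ω)) ∂P with hBh
  have hl0 : (0:ℝ) < l := hl.1
  have hl1 : (0:ℝ) < 1 - l := by linarith [hl.2]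
  have hrl : ENNReal.ofReal l ≠ ⊤ := ENNReal.ofReal_ne_top
  have hrl1 : ENNReal.ofReal (1-l) ≠ ⊤ := ENNReal.ofReal_ne_top
  -- integrated pointwise inequality
  have hint : Ah + ENNReal.ofReal l * Bf + ENNReal.ofReal (1-l) * Bg
      ≤ ENNReal.ofReal l * Af + ENNReal.ofReal (1-l) * Ag + Bh := by
    have step : (∫⁻ ω, (erealToENNReal (h ω) + ENNReal.ofReal l * erealToENNReal (-(f ω))
          + ENNReal.ofReal (1-l) * erealToENNReal (-(g ω))) ∂P)
        ≤ ∫⁻ ω, (ENNReal.ofReal l * erealToENNReal (f ω)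
          + ENNReal.ofReal (1-l) * erealToENNReal (g ω) + erealToENNReal (-(h ω))) ∂P := by
      refine lintegral_mono_ae ?_
      filter_upwards [hfb, hgb, hptw] with ω h1 h2 h3
      exact pointwise_convex hl h1 h2 h3
    rw [lintegral_add_right' _ (hgm.const_mul _), lintegral_add_right' _ (hfm.const_mul _),
      lintegral_add_right' _ hhm, lintegral_add_right' _ (hgp.const_mul _),
      lintegral_const_mul' _ _ hrl, lintegral_const_mul' _ _ hrl1,
      lintegral_const_mul' _ _ hrl, lintegral_const_mul' _ _ hrl1] at step
    exact step
  have hAfle : Af ≤ 1 + Bf := pos_le_one_add_neg hBf hf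
  have hAgle : Ag ≤ 1 + Bg := pos_le_one_add_neg hBg hg
  have hT : ENNReal.ofReal l * Bf + ENNReal.ofReal (1-l) * Bg ≠ ⊤ :=
    ENNReal.add_ne_top.mpr ⟨ENNReal.mul_ne_top hrl hBf, ENNReal.mul_ne_top hrl1 hBg⟩
  have hone : ENNReal.ofReal l + ENNReal.ofReal (1-l) = 1 := by
    rw [← ENNReal.ofReal_add hl0.le hl1.le]
    norm_num
  have hmain : Ah ≤ 1 + Bh := by
    have h2 : Ah + (ENNReal.ofReal l * Bf + ENNReal.ofReal (1-l) * Bg)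
        ≤ (1 + Bh) + (ENNReal.ofReal l * Bf + ENNReal.ofReal (1-l) * Bg) := by
      calc Ah + (ENNReal.ofReal l * Bf + ENNReal.ofReal (1-l) * Bg)
          = Ah + ENNReal.ofReal l * Bf + ENNReal.ofReal (1-l) * Bg := by ring
        _ ≤ ENNReal.ofReal l * Af + ENNReal.ofReal (1-l) * Ag + Bh := hint
        _ ≤ ENNReal.ofReal l * (1 + Bf) + ENNReal.ofReal (1-l) * (1 + Bg) + Bh := by
            gcongr
        _ = (1 + Bh) + (ENNReal.ofReal l * Bf + ENNReal.ofReal (1-l) * Bg) := by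
            rw [mul_add, mul_add, mul_one, mul_one]
            calc ENNReal.ofReal l + ENNReal.ofReal l * Bf
                  + (ENNReal.ofReal (1-l) + ENNReal.ofReal (1-l) * Bg) + Bh
                = (ENNReal.ofReal l + ENNReal.ofReal (1-l)) + Bh
                  + (ENNReal.ofReal l * Bf + ENNReal.ofReal (1-l) * Bg) := by ring
              _ = (1 + Bh) + (ENNReal.ofReal l * Bf + ENNReal.ofReal (1-l) * Bg) := by
                  rw [hone]
    exact (ENNReal.add_le_add_iff_right hT).mp h2
  exact le_trans (sub_le_one_of_pos_le hmain) le_rfl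

lemma eadd_eq_add {a b : EReal} (ha : a ≠ ⊥) (hb : b ≠ ⊥) : eadd a b = a + b :=
  if_neg (by tauto)

lemma coe_mul_ne_bot {x : ℝ} (hx : 0 < x) {a : EReal} (ha : a ≠ ⊥) :
    (x : EReal) * a ≠ ⊥ := by
  induction a using EReal.rec with
  | bot => exact absurd rfl ha
  | coe t => rw [← EReal.coe_mul]; exact EReal.coe_ne_bot _
  | top => rw [EReal.coe_mul_top_of_pos hx]; simp

lemma neg_ne_top_of_ne_bot {a : EReal} (ha : a ≠ ⊥) : -a ≠ ⊤ := by
  induction a using EReal.rec with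
  | bot => exact absurd rfl ha
  | coe t => rw [← EReal.coe_neg]; exact EReal.coe_ne_top _
  | top => simp

lemma e_eq_zero_of_nonpos {x : EReal} (hx : x ≤ 0) : erealToENNReal x = 0 := by
  have hxt : x ≠ ⊤ := fun h => by rw [h] at hx; simp [top_le_iff] at hx
  rw [erealToENNReal, if_neg hxt]
  refine ENNReal.ofReal_of_nonpos ?_
  by_cases hxb : x = ⊥
  · simp [hxb]
  · induction x using EReal.rec with
    | bot => simp
    | coe t => exact_mod_cast hx
    | top => exact absurd rfl hxt

lemma negpart_blowup {P : Measure Ω} [IsProbabilityMeasure P] {Φ : ℝ → EReal}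
    (hΦ : IsOrliczFunction Φ)
    (hGA : ∀ x y : ℝ, 0 ≤ x → 0 ≤ y → ∀ l ∈ Set.Ioo (0 : ℝ) 1,
      Φ (x ^ l * y ^ (1 - l)) ≤
        eadd ((l : EReal) * Φ x) (((1 - l : ℝ) : EReal) * Φ y))
    {μ : ℝ} (hμ : μ ∈ Set.Ioo (0:ℝ) 1) {U W : Ω → ℝ} (hU : Measurable U)
    (hU0 : ∀ᵐ ω ∂P, 0 ≤ U ω) (hW0 : ∀ᵐ ω ∂P, 0 ≤ W ω) {c : ℝ} (hc : 1 ≤ c)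
    (hUW : ∀ᵐ ω ∂P, W ω ≤ c * (U ω) ^ μ)
    (hbot : ∀ᵐ ω ∂P, Φ (U ω) ≠ ⊥)
    (hBf : (∫⁻ ω, erealToENNReal (-(Φ (U ω))) ∂P) = ⊤) :
    (∫⁻ ω, erealToENNReal (-(Φ (W ω))) ∂P) = ⊤ := by
  have hc0 : (0:ℝ) < c := lt_of_lt_of_le one_pos hc
  have hlogc : 0 ≤ Real.log c := Real.log_nonneg hc
  set ε : ℝ := min (Real.exp (-(2 * Real.log c)/μ)) (Real.exp (-1)) with hε
  have hε0 : 0 < ε := lt_min (Real.exp_pos _) (Real.exp_pos _)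
  have hε1 : ε ≤ Real.exp (-1) := min_le_right _ _
  have hε2 : ε ≤ Real.exp (-(2 * Real.log c)/μ) := min_le_left _ _
  clear_value ε
  set T : Set Ω := {ω | 0 < U ω ∧ U ω < ε} with hT
  have hTmeas : MeasurableSet T :=
    (measurableSet_lt measurable_const hU).inter (measurableSet_lt hU measurable_const)
  -- Step A : the integral of the negative part off T is finite
  have hPhiε : Φ ε ≠ ⊥ := hΦ.ne_bot ε hε0
  obtain ⟨M0, hM0top, hM0⟩ :
      ∃ M0 : ℝ≥0∞, M0 ≠ ⊤ ∧ ∀ᵐ ω ∂P, ω ∈ Tᶜ → erealToENNReal (-(Φ (U ω))) ≤ M0 := by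
    by_cases h0 : Φ 0 = ⊥
    · refine ⟨erealToENNReal (-(Φ ε)), e_ne_top (neg_ne_top_of_ne_bot hPhiε), ?_⟩
      filter_upwards [hU0, hbot] with ω h1 h2 h3
      have hUε : ε ≤ U ω := by
        rcases lt_or_ge (U ω) ε with h | h
        · rcases eq_or_lt_of_le h1 with h' | h'
          · exact absurd (h' ▸ h0) h2
          · exact absurd ⟨h', h⟩ h3
        · exact h
      exact e_mono (EReal.neg_le_neg_iff.mpr (hΦ.mono _ _ hε0.le hUε))
    · refine ⟨max (erealToENNReal (-(Φ 0))) (erealToENNReal (-(Φ ε))),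
        max_lt (lt_top_iff_ne_top.mpr (e_ne_top (neg_ne_top_of_ne_bot h0)))
          (lt_top_iff_ne_top.mpr (e_ne_top (neg_ne_top_of_ne_bot hPhiε))) |>.ne, ?_⟩
      filter_upwards [hU0] with ω h1 h3
      rcases lt_or_ge (U ω) ε with h | h
      · rcases eq_or_lt_of_le h1 with h' | h'
        · refine le_trans (le_of_eq ?_) (le_max_left _ _)
          rw [← h']
        · exact absurd ⟨h', h⟩ h3
      · exact le_trans (e_mono (EReal.neg_le_neg_iff.mpr (hΦ.mono _ _ hε0.le h)))
          (le_max_right _ _)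
  have hcomplfin : (∫⁻ ω in Tᶜ, erealToENNReal (-(Φ (U ω))) ∂P) ≠ ⊤ := by
    have : (∫⁻ ω in Tᶜ, erealToENNReal (-(Φ (U ω))) ∂P) ≤ M0 * P Tᶜ := by
      rw [← setLIntegral_const]
      refine lintegral_mono_ae ?_
      exact (ae_restrict_iff' hTmeas.compl).mpr hM0
    exact (lt_of_le_of_lt this (lt_of_le_of_lt
      (mul_le_of_le_one_right' prob_le_one) (lt_top_iff_ne_top.mpr hM0top))).ne
  -- Step B : the integral of the negative part on T is infinite
  have hTinf : (∫⁻ ω in T, erealToENNReal (-(Φ (U ω))) ∂P) = ⊤ := by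
    have hsplit := lintegral_add_compl (fun ω => erealToENNReal (-(Φ (U ω)))) hTmeas (μ := P)
    rw [hBf] at hsplit
    by_contra hne
    exact (ENNReal.add_ne_top.mpr ⟨hne, hcomplfin⟩) hsplit
  -- Step C : pointwise estimate on T
  have hptw : ∀ᵐ ω ∂P, ω ∈ T →
      ENNReal.ofReal (μ/2) * erealToENNReal (-(Φ (U ω)))
        ≤ erealToENNReal (-(Φ (W ω))) + 1 := by
    filter_upwards [hU0, hW0, hUW, hbot] with ω h1 h2 h3 h4 hTT
    obtain ⟨hu0, huε⟩ := hTT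
    set u := U ω with hu
    clear_value u
    set lam : ℝ := μ + Real.log c / Real.log u with hlam
    have hlogu_neg : Real.log u < -1 := by
      have : Real.log u < Real.log (Real.exp (-1)) :=
        Real.log_lt_log hu0 (lt_of_lt_of_le huε hε1)
      simpa [Real.log_exp] using this
    have hlogu0 : Real.log u < 0 := by linarith
    have hlam_le : lam ≤ μ := by
      have h' : Real.log c / Real.log u ≤ 0 :=
        div_nonpos_of_nonneg_of_nonpos hlogc hlogu0.le
      rw [hlam]
      linarith
    have hlam_ge : μ/2 ≤ lam := by
      have hloguε : Real.log u ≤ -(2 * Real.log c)/μ := by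
        have : Real.log u < Real.log (Real.exp (-(2 * Real.log c)/μ)) :=
          Real.log_lt_log hu0 (lt_of_lt_of_le huε hε2)
        simpa [Real.log_exp] using this.le
      have h2' : Real.log c / Real.log u ≥ -(μ/2) := by
        rw [ge_iff_le, neg_le, ← neg_div]
        rw [div_le_iff_of_neg hlogu0]
        have hμ2 : 0 < μ/2 := by linarith [hμ.1]
        calc μ/2 * Real.log u ≤ μ/2 * (-(2 * Real.log c)/μ) := by
              exact mul_le_mul_of_nonneg_left hloguε hμ2.le
          _ = -Real.log c := by
              have hμ0 : μ ≠ 0 := ne_of_gt hμ.1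
              field_simp
      rw [hlam]
      linarith
    have hlam0 : 0 < lam := lt_of_lt_of_le (by linarith [hμ.1]) hlam_ge
    have hlam1 : lam < 1 := lt_of_le_of_lt hlam_le hμ.2
    -- u ^ lam = c * u ^ μ
    have hualg : u ^ lam = c * u ^ μ := by
      rw [Real.rpow_def_of_pos hu0, Real.rpow_def_of_pos hu0, hlam, mul_add,
        mul_comm (Real.log u) (Real.log c / Real.log u), div_mul_cancel₀ _ hlogu0.ne,
        Real.exp_add, Real.exp_log hc0]
      ring
    -- Φ (W ω) ≤ Φ (u ^ lam)
    have hWle : Φ (W ω) ≤ Φ (u ^ lam) := by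
      rw [hualg]; exact hΦ.mono _ _ h2 h3
    -- GA convexity at (u, 1)
    have hGAu := hGA u 1 hu0.le zero_le_one lam ⟨hlam0, hlam1⟩
    rw [Real.one_rpow, mul_one] at hGAu
    rw [eadd_eq_add (coe_mul_ne_bot hlam0 h4)
      (coe_mul_ne_bot (by linarith) (hΦ.ne_bot 1 one_pos))] at hGAu
    -- case on the sign of Φ u
    rcases le_or_gt (Φ u) 0 with hsign | hsign
    · -- Φ u is a nonpositive real number
      have hut : Φ u ≠ ⊤ := fun h => by rw [h] at hsign; simp [top_le_iff] at hsign
      lift Φ u to ℝ using ⟨hut, h4⟩ with t ht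
      have ht0 : t ≤ 0 := by exact_mod_cast hsign
      have hp_ne_top : Φ 1 ≠ ⊤ := fun h => by
        have h1 := hΦ.le_one 1 zero_le_one le_rfl
        rw [h, top_le_iff] at h1
        exact (EReal.coe_one ▸ EReal.coe_ne_top 1) h1
      lift Φ 1 to ℝ using ⟨hp_ne_top, hΦ.ne_bot 1 one_pos⟩ with p hp
      have hp1 : p ≤ 1 := by
        have h1 := hΦ.le_one 1 zero_le_one le_rfl
        rw [← hp] at h1
        exact_mod_cast h1
      -- the EReal bound becomes a real bound
      have hbound : Φ (W ω) ≤ ((μ/2 * t + 1 : ℝ) : EReal) := by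
        refine le_trans (le_trans hWle hGAu) ?_
        rw [← EReal.coe_mul, ← EReal.coe_mul, ← EReal.coe_add]
        refine EReal.coe_le_coe_iff.mpr ?_
        clear_value lam
        have h1' : lam * t ≤ μ/2 * t := by nlinarith
        have h2' : (1 - lam) * p ≤ 1 := by nlinarith
        linarith
      -- translate to ENNReal
      have hneg : ((-(μ/2 * t + 1) : ℝ) : EReal) ≤ -(Φ (W ω)) := by
        rw [EReal.coe_neg]
        exact EReal.neg_le_neg_iff.mpr hbound
      have he1 : erealToENNReal (-((t : ℝ) : EReal)) = ENNReal.ofReal (-t) := by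
        rw [← EReal.coe_neg, e_coe]
      rw [he1, ← ENNReal.ofReal_mul (by linarith [hμ.1] : (0:ℝ) ≤ μ/2)]
      calc ENNReal.ofReal (μ/2 * -t)
          = ENNReal.ofReal ((-(μ/2 * t + 1)) + 1) := by ring_nf
        _ ≤ ENNReal.ofReal (-(μ/2 * t + 1)) + ENNReal.ofReal 1 := ENNReal.ofReal_add_le
        _ ≤ erealToENNReal (-(Φ (W ω))) + 1 := by
            rw [ENNReal.ofReal_one]
            exact add_le_add (by rw [← e_coe]; exact e_mono hneg) le_rfl
    · -- Φ u > 0 : the left-hand side vanishes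
      have : erealToENNReal (-(Φ u)) = 0 :=
        e_eq_zero_of_nonpos (by rw [← neg_zero]; exact EReal.neg_le_neg_iff.mpr hsign.le)
      rw [this, mul_zero]
      exact zero_le
  -- Step D : integrate over T
  have hμ2pos : ENNReal.ofReal (μ/2) ≠ 0 := by
    simp only [ne_eq, ENNReal.ofReal_eq_zero, not_le]
    linarith [hμ.1]
  have hfinal : (⊤:ℝ≥0∞) ≤ (∫⁻ ω, erealToENNReal (-(Φ (W ω))) ∂P) + 1 := by
    calc (⊤:ℝ≥0∞) = ENNReal.ofReal (μ/2) * ∫⁻ ω in T, erealToENNReal (-(Φ (U ω))) ∂P := by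
          rw [hTinf, ENNReal.mul_top hμ2pos]
      _ = ∫⁻ ω in T, ENNReal.ofReal (μ/2) * erealToENNReal (-(Φ (U ω))) ∂P :=
          (lintegral_const_mul' _ _ ENNReal.ofReal_ne_top).symm
      _ ≤ ∫⁻ ω in T, (erealToENNReal (-(Φ (W ω))) + 1) ∂P := by
          refine lintegral_mono_ae ((ae_restrict_iff' hTmeas).mpr hptw)
      _ = (∫⁻ ω in T, erealToENNReal (-(Φ (W ω))) ∂P) + 1 * P T := by
          rw [lintegral_add_right' _ aemeasurable_const, lintegral_const,
            Measure.restrict_apply_univ]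
      _ ≤ (∫⁻ ω, erealToENNReal (-(Φ (W ω))) ∂P) + 1 := by
          gcongr
          · exact Measure.restrict_le_self
          · rw [one_mul]; exact prob_le_one
  by_contra hne
  exact (ENNReal.add_ne_top.mpr ⟨hne, ENNReal.one_ne_top⟩) (top_le_iff.mp hfinal)

lemma phi_div_ne_bot {P : Measure Ω} {Φ : ℝ → EReal} (hΦ : IsOrliczFunction Φ)
    {X : Ω → ℝ} (hX0 : ∀ᵐ ω ∂P, 0 ≤ X ω) (h0 : Φ 0 = ⊥ → ∀ᵐ ω ∂P, X ω ≠ 0)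
    {k : ℝ} (hk : 0 < k) : ∀ᵐ ω ∂P, Φ (X ω / k) ≠ ⊥ := by
  by_cases hb : Φ 0 = ⊥
  · filter_upwards [hX0, h0 hb] with ω h1 h2
    exact hΦ.ne_bot _ (div_pos (lt_of_le_of_ne h1 (Ne.symm h2)) hk)
  · filter_upwards [hX0] with ω h1
    intro hcon
    exact hb (le_bot_iff.mp (hcon ▸ hΦ.mono 0 (X ω / k) le_rfl (div_nonneg h1 hk.le)))

lemma mem_S_combination {P : Measure Ω} [IsProbabilityMeasure P] {Φ : ℝ → EReal}
    (hΦ : IsOrliczFunction Φ)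
    (hGA : ∀ x y : ℝ, 0 ≤ x → 0 ≤ y → ∀ l ∈ Set.Ioo (0 : ℝ) 1,
      Φ (x ^ l * y ^ (1 - l)) ≤
        eadd ((l : EReal) * Φ x) (((1 - l : ℝ) : EReal) * Φ y))
    {X Y : Ω → ℝ} (hX : MemLinftyPlus P X) (hY : MemLinftyPlus P Y)
    (hX0 : Φ 0 = ⊥ → ∀ᵐ ω ∂P, X ω ≠ 0) (hY0 : Φ 0 = ⊥ → ∀ᵐ ω ∂P, Y ω ≠ 0)
    {l : ℝ} (hl : l ∈ Set.Ioo (0:ℝ) 1) {k1 k2 : ℝ}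
    (hk1 : k1 ∈ S P Φ X) (hk2 : k2 ∈ S P Φ Y) :
    (k1 ^ l * k2 ^ (1-l)) ∈ S P Φ (fun ω => X ω ^ l * Y ω ^ (1 - l)) := by
  obtain ⟨hk1p, hk1e⟩ := hk1
  obtain ⟨hk2p, hk2e⟩ := hk2
  have hl1 : (0:ℝ) < 1 - l := by linarith [hl.2]
  have hkpos : 0 < k1 ^ l * k2 ^ (1-l) :=
    mul_pos (Real.rpow_pos_of_pos hk1p l) (Real.rpow_pos_of_pos hk2p (1-l))
  set k := k1 ^ l * k2 ^ (1-l) with hk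
  set Z : Ω → ℝ := fun ω => X ω ^ l * Y ω ^ (1 - l) with hZ
  obtain ⟨CX, hCX⟩ := hX.2.2
  obtain ⟨CY, hCY⟩ := hY.2.2
  set DX : ℝ := max (CX / k1) 1 with hDX
  set DY : ℝ := max (CY / k2) 1 with hDY
  have hDX1 : 1 ≤ DX := le_max_right _ _
  have hDY1 : 1 ≤ DY := le_max_right _ _
  -- a.e. facts
  have hXk0 : ∀ᵐ ω ∂P, 0 ≤ X ω / k1 := hX.2.1.mono fun ω h => div_nonneg h hk1p.le
  have hYk0 : ∀ᵐ ω ∂P, 0 ≤ Y ω / k2 := hY.2.1.mono fun ω h => div_nonneg h hk2p.le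
  have hXkD : ∀ᵐ ω ∂P, X ω / k1 ≤ DX := by
    filter_upwards [hCX] with ω h
    exact le_trans (div_le_div_of_nonneg_right h hk1p.le) (le_max_left _ _)
  have hYkD : ∀ᵐ ω ∂P, Y ω / k2 ≤ DY := by
    filter_upwards [hCY] with ω h
    exact le_trans (div_le_div_of_nonneg_right h hk2p.le) (le_max_left _ _)
  have halg : ∀ᵐ ω ∂P, Z ω / k = (X ω / k1) ^ l * (Y ω / k2) ^ (1-l) := by
    filter_upwards [hX.2.1, hY.2.1] with ω h1 h2
    rw [Real.div_rpow h1 hk1p.le, Real.div_rpow h2 hk2p.le, div_mul_div_comm]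
  have hZ0 : ∀ᵐ ω ∂P, 0 ≤ Z ω := by
    filter_upwards [hX.2.1, hY.2.1] with ω h1 h2
    exact mul_nonneg (Real.rpow_nonneg h1 l) (Real.rpow_nonneg h2 (1-l))
  have hZk0 : ∀ᵐ ω ∂P, 0 ≤ Z ω / k := hZ0.mono fun ω h => div_nonneg h hkpos.le
  have hfb : ∀ᵐ ω ∂P, Φ (X ω / k1) ≠ ⊥ := phi_div_ne_bot hΦ hX.2.1 hX0 hk1p
  have hgb : ∀ᵐ ω ∂P, Φ (Y ω / k2) ≠ ⊥ := phi_div_ne_bot hΦ hY.2.1 hY0 hk2p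
  refine ⟨hkpos, ?_⟩
  by_cases hBf : (∫⁻ ω, erealToENNReal (-(Φ (X ω / k1))) ∂P) = ⊤
  · -- negative part of the X side explodes
    have hblow : (∫⁻ ω, erealToENNReal (-(Φ (Z ω / k))) ∂P) = ⊤ := by
      refine negpart_blowup hΦ hGA hl (U := fun ω => X ω / k1) (W := fun ω => Z ω / k)
        (hX.1.div_const k1) hXk0 hZk0
        (c := DY ^ (1-l)) ?_ ?_ hfb hBf
      · calc (1:ℝ) = 1 ^ (1-l) := (Real.one_rpow _).symm
          _ ≤ DY ^ (1-l) := Real.rpow_le_rpow zero_le_one hDY1 hl1.le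
      · filter_upwards [halg, hXk0, hYk0, hYkD] with ω h1 h2 h3 h4
        rw [h1, mul_comm (DY ^ (1-l))]
        exact mul_le_mul_of_nonneg_left (Real.rpow_le_rpow h3 h4 hl1.le)
          (Real.rpow_nonneg h2 l)
    exact le_trans (le_of_eq (eexp_bot_of_neg_top hblow)) bot_le
  by_cases hBg : (∫⁻ ω, erealToENNReal (-(Φ (Y ω / k2))) ∂P) = ⊤
  · have hblow : (∫⁻ ω, erealToENNReal (-(Φ (Z ω / k))) ∂P) = ⊤ := by
      refine negpart_blowup hΦ hGA ⟨hl1, by linarith [hl.1]⟩ (U := fun ω => Y ω / k2)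
        (W := fun ω => Z ω / k) (hY.1.div_const k2) hYk0 hZk0
        (c := DX ^ l) ?_ ?_ hgb hBg
      · calc (1:ℝ) = 1 ^ l := (Real.one_rpow _).symm
          _ ≤ DX ^ l := Real.rpow_le_rpow zero_le_one hDX1 hl.1.le
      · filter_upwards [halg, hXk0, hYk0, hXkD] with ω h1 h2 h3 h4
        rw [h1]
        exact mul_le_mul_of_nonneg_right (Real.rpow_le_rpow h2 h4 hl.1.le)
          (Real.rpow_nonneg h3 (1-l))
    exact le_trans (le_of_eq (eexp_bot_of_neg_top hblow)) bot_le
  -- main quantitative case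
  have hfA : AEMeasurable (fun ω => Φ (X ω / k1)) P :=
    phi_comp_aemeas hΦ (hX.1.div_const k1) hXk0
  have hgA : AEMeasurable (fun ω => Φ (Y ω / k2)) P :=
    phi_comp_aemeas hΦ (hY.1.div_const k2) hYk0
  have hcont1 : Continuous fun x : ℝ => x ^ l :=
    continuous_iff_continuousAt.mpr fun x => Real.continuousAt_rpow_const x l (Or.inr hl.1.le)
  have hcont2 : Continuous fun x : ℝ => x ^ (1-l) :=
    continuous_iff_continuousAt.mpr fun x => Real.continuousAt_rpow_const x (1-l) (Or.inr hl1.le)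
  have hZmeas : Measurable Z :=
    (hcont1.measurable.comp hX.1).mul (hcont2.measurable.comp hY.1)
  have hhA : AEMeasurable (fun ω => Φ (Z ω / k)) P :=
    phi_comp_aemeas hΦ (hZmeas.div_const k) hZk0
  have negmeas : Measurable (fun x : EReal => erealToENNReal (-x)) :=
    e_measurable.comp measurable_neg
  refine eexp_le_one_of_convex_bound hl
    (negmeas.comp_aemeasurable hfA) (negmeas.comp_aemeasurable hgA)
    (e_measurable.comp_aemeasurable hgA) (negmeas.comp_aemeasurable hhA)
    hfb hgb ?_ hk1e hk2e hBf hBg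
  filter_upwards [halg, hXk0, hYk0, hfb, hgb] with ω h1 h2 h3 h4 h5
  rw [h1, ← eadd_eq_add (coe_mul_ne_bot hl.1 h4) (coe_mul_ne_bot hl1 h5)]
  exact hGA _ _ h2 h3 l hl

end OrliczAux

open OrliczAux

/-- if the Orlicz function `Φ` is GA-convex, then `H_Φ` is GG-convex. -/
theorem orliczPremium_ggConvex_of_gaConvex
    (P : Measure Ω) [IsProbabilityMeasure P] (Φ : ℝ → EReal)
    (hΦ : IsOrliczFunction Φ)
    (hGA : ∀ x y : ℝ, 0 ≤ x → 0 ≤ y → ∀ l ∈ Set.Ioo (0 : ℝ) 1,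
      Φ (x ^ l * y ^ (1 - l)) ≤
        eadd ((l : EReal) * Φ x) (((1 - l : ℝ) : EReal) * Φ y)) :
    ∀ X Y : Ω → ℝ, MemLinftyPlus P X → MemLinftyPlus P Y →
      ∀ l ∈ Set.Ioo (0 : ℝ) 1,
        orliczPremium P Φ (fun ω => X ω ^ l * Y ω ^ (1 - l)) ≤
          orliczPremium P Φ X ^ l * orliczPremium P Φ Y ^ (1 - l) := by
  intro X Y hX hY l hl
  have hl1 : (0:ℝ) < 1 - l := by linarith [hl.2]
  set a := orliczPremium P Φ X with ha
  set b := orliczPremium P Φ Y with hb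
  have ha0 : 0 ≤ a := orliczPremium_nonneg P Φ X
  have hb0 : 0 ≤ b := orliczPremium_nonneg P Φ Y
  have hRHS0 : 0 ≤ a ^ l * b ^ (1-l) :=
    mul_nonneg (Real.rpow_nonneg ha0 l) (Real.rpow_nonneg hb0 (1-l))
  set Z : Ω → ℝ := fun ω => X ω ^ l * Y ω ^ (1 - l) with hZdef
  by_cases hZbr : Φ 0 = ⊥ ∧ 0 < P {ω | Z ω = 0}
  · rw [show orliczPremium P Φ Z = 0 from by rw [orliczPremium, if_pos hZbr]]
    exact hRHS0
  · have hXbr : ¬(Φ 0 = ⊥ ∧ 0 < P {ω | X ω = 0}) := by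
      rintro ⟨hbb, hpos⟩
      refine hZbr ⟨hbb, lt_of_lt_of_le hpos (measure_mono ?_)⟩
      intro ω hω
      have hω' : X ω = 0 := hω
      show Z ω = 0
      rw [hZdef]
      simp only
      rw [hω', Real.zero_rpow (ne_of_gt hl.1), zero_mul]
    have hYbr : ¬(Φ 0 = ⊥ ∧ 0 < P {ω | Y ω = 0}) := by
      rintro ⟨hbb, hpos⟩
      refine hZbr ⟨hbb, lt_of_lt_of_le hpos (measure_mono ?_)⟩
      intro ω hω
      have hω' : Y ω = 0 := hω
      show Z ω = 0
      rw [hZdef]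
      simp only
      rw [hω', Real.zero_rpow (ne_of_gt hl1), mul_zero]
    have haX : a = sInf (S P Φ X) := by rw [ha, orliczPremium, if_neg hXbr]; rfl
    have hbY : b = sInf (S P Φ Y) := by rw [hb, orliczPremium, if_neg hYbr]; rfl
    have hLHS : orliczPremium P Φ Z = sInf (S P Φ Z) := by
      rw [orliczPremium, if_neg hZbr]; rfl
    rw [hLHS]
    have hX0 : Φ 0 = ⊥ → ∀ᵐ ω ∂P, X ω ≠ 0 := by
      intro hbb
      have hP0 : P {ω | X ω = 0} = 0 := by
        by_contra hne
        exact hXbr ⟨hbb, lt_of_le_of_ne zero_le (Ne.symm hne)⟩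
      rw [ae_iff]
      simpa using hP0
    have hY0 : Φ 0 = ⊥ → ∀ᵐ ω ∂P, Y ω ≠ 0 := by
      intro hbb
      have hP0 : P {ω | Y ω = 0} = 0 := by
        by_contra hne
        exact hYbr ⟨hbb, lt_of_le_of_ne zero_le (Ne.symm hne)⟩
      rw [ae_iff]
      simpa using hP0
    have key : ∀ δ : ℝ, 0 < δ → sInf (S P Φ Z) ≤ (a + δ) ^ l * (b + δ) ^ (1-l) := by
      intro δ hδ
      have hk1 : (a + δ) ∈ S P Φ X :=
        mem_S_of_sInf_lt hΦ hX (by rw [← haX]; linarith)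
      have hk2 : (b + δ) ∈ S P Φ Y :=
        mem_S_of_sInf_lt hΦ hY (by rw [← hbY]; linarith)
      exact csInf_le S_bddBelow (mem_S_combination hΦ hGA hX hY hX0 hY0 hl hk1 hk2)
    -- pass to the limit δ → 0⁺
    have hcont : ContinuousAt (fun δ : ℝ => (a + δ) ^ l * (b + δ) ^ (1-l)) 0 := by
      have c1 : ContinuousAt (fun δ : ℝ => a + δ) 0 := by fun_prop
      have c2 : ContinuousAt (fun δ : ℝ => b + δ) 0 := by fun_prop
      have r1 : ContinuousAt (fun x : ℝ => x ^ l) (a + 0) :=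
        Real.continuousAt_rpow_const _ _ (Or.inr hl.1.le)
      have r2 : ContinuousAt (fun x : ℝ => x ^ (1-l)) (b + 0) :=
        Real.continuousAt_rpow_const _ _ (Or.inr hl1.le)
      exact (r1.comp c1).mul (r2.comp c2)
    have htend : Filter.Tendsto (fun δ : ℝ => (a + δ) ^ l * (b + δ) ^ (1-l))
        (nhdsWithin 0 (Set.Ioi 0)) (nhds (a ^ l * b ^ (1-l))) := by
      have := hcont.tendsto
      rw [show (a + 0) ^ l * (b + 0) ^ (1-l) = a ^ l * b ^ (1-l) by rw [add_zero, add_zero]] at this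
      exact this.mono_left nhdsWithin_le_nhds
    refine ge_of_tendsto htend ?_
    filter_upwards [self_mem_nhdsWithin] with δ hδ
    exact key δ hδ
end
end

section
/- Let ρ : L∞₊ → [0,∞) be a convex return risk measure satisfying the Fatou property. Then for every X ∈ L∞₊, ρ(X) = sup over probability measures Q on (Ω, F) with Q ≪ P of β(Q)·E_Q[X], where β(Q) := (sup_{Y ∈ B_ρ} E_Q[Y])^{-1} and B_ρ := {Y ∈ L∞₊ : ρ(Y) ≤ 1} is the multiplicative acceptance set of ρ. -/
open MeasureTheory Filter Set
open scoped ENNReal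

noncomputable section

variable {Ω : Type*} [MeasurableSpace Ω]

section AuxRRM

variable {P : Measure Ω}

lemma MemLinftyPlus.memLp2 [IsProbabilityMeasure P] {X : Ω → ℝ}
    (hX : MemLinftyPlus P X) : MemLp X 2 P := by
  obtain ⟨hm, h0, C, hC⟩ := hX
  refine MemLp.of_bound hm.aestronglyMeasurable (max C 0) ?_
  filter_upwards [h0, hC] with ω h1 h2
  rw [Real.norm_eq_abs, abs_of_nonneg h1]
  exact le_max_of_le_left h2

lemma MemLinftyPlus.integrable_mul [IsProbabilityMeasure P] {X Z : Ω → ℝ}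
    (hX : MemLinftyPlus P X) (hZ : Integrable Z P) :
    Integrable (fun ω => Z ω * X ω) P := by
  obtain ⟨hm, h0, C, hC⟩ := hX
  have := hZ.bdd_mul (f := X) (c := max C 0) hm.aestronglyMeasurable ?_
  · exact this.congr (by filter_upwards with ω; ring)
  · filter_upwards [h0, hC] with ω h1 h2
    rw [Real.norm_eq_abs, abs_of_nonneg h1]; exact le_max_of_le_left h2

lemma MemLinftyPlus.const_mul' {X : Ω → ℝ}
    (hX : MemLinftyPlus P X) {l : ℝ} (hl : 0 ≤ l) :
    MemLinftyPlus P (fun ω => l * X ω) := by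
  obtain ⟨hm, h0, C, hC⟩ := hX
  exact ⟨hm.const_mul l, by filter_upwards [h0] with ω h using mul_nonneg hl h,
    l * C, by filter_upwards [hC] with ω h using mul_le_mul_of_nonneg_left h hl⟩

lemma memLinftyPlus_one (P : Measure Ω) : MemLinftyPlus P (fun _ => (1:ℝ)) :=
  ⟨measurable_const, ae_of_all _ fun _ => zero_le_one, 1, ae_of_all _ fun _ => le_rfl⟩

lemma abs_min_sub_min_le (a b c : ℝ) : |min a c - min b c| ≤ |a - b| := by
  rcases le_total a c with h1 | h1 <;> rcases le_total b c with h2 | h2 <;>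
    simp [min_eq_left, min_eq_right, h1, h2] <;> rw [abs_le] <;>
    cases abs_cases (a - b) <;> constructor <;> linarith

lemma tendstoInMeasure_of_ae_dominated {f g : ℕ → Ω → ℝ} {F : Ω → ℝ}
    (h : ∀ n, ∀ᵐ ω ∂P, |f n ω - F ω| ≤ |g n ω - F ω|)
    (hg : TendstoInMeasure P g atTop F) : TendstoInMeasure P f atTop F := by
  intro ε hε
  refine tendsto_of_tendsto_of_tendsto_of_le_of_le tendsto_const_nhds (hg ε hε)
    (fun n => zero_le) (fun n => measure_mono_ae ?_)
  filter_upwards [h n] with ω hω hmem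
  change ε ≤ edist _ _ at hmem
  change ε ≤ edist _ _
  rw [edist_dist, Real.dist_eq] at hmem ⊢
  exact hmem.trans (ENNReal.ofReal_le_ofReal hω)

set_option linter.unusedSectionVars false in
lemma rho_zero_le_one (P : Measure Ω) (ρ : (Ω → ℝ) → ℝ)
    (hhom : ∀ X : Ω → ℝ, MemLinftyPlus P X → ∀ l : ℝ, 0 ≤ l →
      ρ (fun ω => l * X ω) = l * ρ X) : ρ (fun _ => (0:ℝ)) ≤ 1 := by
  have h := hhom (fun _ => 1) (memLinftyPlus_one P) 0 le_rfl
  have he : (fun ω : Ω => (0:ℝ) * 1) = (fun _ : Ω => (0:ℝ)) := by funext ω; ring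
  rw [he] at h
  rw [h]; norm_num

set_option synthInstance.maxHeartbeats 1000000 in
lemma rrm_not_mem_closure (P : Measure Ω) [IsProbabilityMeasure P] (ρ : (Ω → ℝ) → ℝ)
    (hmono : ∀ X Y : Ω → ℝ, MemLinftyPlus P X → MemLinftyPlus P Y →
      (∀ᵐ ω ∂P, X ω ≤ Y ω) → ρ X ≤ ρ Y)
    (hFatou : ∀ (X : Ω → ℝ) (Xn : ℕ → Ω → ℝ) (k : ℝ),
      MemLinftyPlus P X → (∀ n, MemLinftyPlus P (Xn n)) →
      (∀ n, ∀ᵐ ω ∂P, |Xn n ω| ≤ k) →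
      TendstoInMeasure P Xn atTop X →
      ρ X ≤ atTop.liminf fun n => ρ (Xn n))
    (hnonneg : ∀ X : Ω → ℝ, MemLinftyPlus P X → 0 ≤ ρ X)
    (X : Ω → ℝ) (hX : MemLinftyPlus P X) (hρX : 1 < ρ X) :
    hX.memLp2.toLp X ∉
      closure {g : Lp ℝ 2 P | ∃ Y, MemLinftyPlus P Y ∧ ρ Y ≤ 1 ∧ (↑g : Ω → ℝ) =ᵐ[P] Y} := by
  intro hmem
  obtain ⟨g, hgs, hgt⟩ := mem_closure_iff_seq_limit.1 hmem
  choose Y hYmem hYρ hYae using hgs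
  have htimY : TendstoInMeasure P (fun n => Y n) atTop X :=
    (tendstoInMeasure_of_tendsto_Lp hgt).congr hYae (hX.memLp2.coeFn_toLp)
  obtain ⟨hm, h0, C, hC⟩ := hX
  set k : ℝ := max C 1 with hk
  have hk1 : (1 : ℝ) ≤ k := le_max_right _ _
  have hk0 : (0 : ℝ) ≤ k := zero_le_one.trans hk1
  have hXk : ∀ᵐ ω ∂P, X ω ≤ k := by
    filter_upwards [hC] with ω h using h.trans (le_max_left _ _)
  set T : ℕ → Ω → ℝ := fun n ω => min (Y n ω) (2 * k) with hT
  have hTmem : ∀ n, MemLinftyPlus P (T n) := by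
    intro n
    obtain ⟨hm', h0', C', hC'⟩ := hYmem n
    exact ⟨hm'.min measurable_const,
      by filter_upwards [h0'] with ω h using le_min h (by positivity),
      2 * k, ae_of_all _ fun ω => min_le_right _ _⟩
  have hTρ : ∀ n, ρ (T n) ≤ 1 := fun n =>
    (hmono (T n) (Y n) (hTmem n) (hYmem n)
      (ae_of_all _ fun ω => min_le_left _ _)).trans (hYρ n)
  have hTbd : ∀ n, ∀ᵐ ω ∂P, |T n ω| ≤ 2 * k := by
    intro n
    obtain ⟨hm', h0', C', hC'⟩ := hYmem n
    filter_upwards [h0'] with ω h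
    rw [abs_le]
    exact ⟨by nlinarith [le_min h (by positivity : (0:ℝ) ≤ 2*k)], min_le_right _ _⟩
  have htimT : TendstoInMeasure P T atTop X := by
    refine tendstoInMeasure_of_ae_dominated (fun n => ?_) htimY
    filter_upwards [hXk] with ω h
    have hX2k : X ω = min (X ω) (2 * k) := (min_eq_left (by linarith)).symm
    calc |T n ω - X ω| = |min (Y n ω) (2*k) - min (X ω) (2*k)| := by rw [← hX2k]
      _ ≤ |Y n ω - X ω| := abs_min_sub_min_le _ _ _
  have hfat := hFatou X T (2 * k) ⟨hm, h0, C, hC⟩ hTmem hTbd htimT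
  have hliminf : atTop.liminf (fun n => ρ (T n)) ≤ 1 := by
    refine Filter.liminf_le_of_frequently_le (Frequently.of_forall fun n => hTρ n) ?_
    exact Filter.isBoundedUnder_of ⟨0, fun n => hnonneg (T n) (hTmem n)⟩
  linarith

set_option synthInstance.maxHeartbeats 1000000 in
/-- Separation of `X` (with `ρ X > 1`) from the acceptance set by a nonnegative density. -/
lemma rrm_separation (P : Measure Ω) [IsProbabilityMeasure P] (ρ : (Ω → ℝ) → ℝ)
    (hmono : ∀ X Y : Ω → ℝ, MemLinftyPlus P X → MemLinftyPlus P Y →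
      (∀ᵐ ω ∂P, X ω ≤ Y ω) → ρ X ≤ ρ Y)
    (hhom : ∀ X : Ω → ℝ, MemLinftyPlus P X → ∀ l : ℝ, 0 ≤ l →
      ρ (fun ω => l * X ω) = l * ρ X)
    (hnonneg : ∀ X : Ω → ℝ, MemLinftyPlus P X → 0 ≤ ρ X)
    (hconv : ∀ X Y : Ω → ℝ, MemLinftyPlus P X → MemLinftyPlus P Y →
      ∀ a ∈ Set.Ioo (0 : ℝ) 1,
        ρ (fun ω => a * X ω + (1 - a) * Y ω) ≤ a * ρ X + (1 - a) * ρ Y)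
    (hFatou : ∀ (X : Ω → ℝ) (Xn : ℕ → Ω → ℝ) (k : ℝ),
      MemLinftyPlus P X → (∀ n, MemLinftyPlus P (Xn n)) →
      (∀ n, ∀ᵐ ω ∂P, |Xn n ω| ≤ k) →
      TendstoInMeasure P Xn atTop X →
      ρ X ≤ atTop.liminf fun n => ρ (Xn n))
    (X : Ω → ℝ) (hX : MemLinftyPlus P X) (hρX : 1 < ρ X) :
    ∃ Z : Ω → ℝ, Measurable Z ∧ (∀ ω, 0 ≤ Z ω) ∧ Integrable Z P ∧
      ∃ u : ℝ, 0 < u ∧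
        (∀ Y, MemLinftyPlus P Y → ρ Y ≤ 1 → ∫ ω, Z ω * Y ω ∂P < u) ∧
        u < ∫ ω, Z ω * X ω ∂P := by
  classical
  set s : Set (Lp ℝ 2 P) :=
    {g | ∃ Y, MemLinftyPlus P Y ∧ ρ Y ≤ 1 ∧ (↑g : Ω → ℝ) =ᵐ[P] Y} with hs
  have hconvs : Convex ℝ s := by
    rintro g₁ ⟨Y₁, hY₁, hρ₁, hae₁⟩ g₂ ⟨Y₂, hY₂, hρ₂, hae₂⟩ a b ha hb hab
    refine ⟨fun ω => a * Y₁ ω + b * Y₂ ω, ?_, ?_, ?_⟩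
    · obtain ⟨hm₁, h0₁, C₁, hC₁⟩ := hY₁
      obtain ⟨hm₂, h0₂, C₂, hC₂⟩ := hY₂
      refine ⟨(hm₁.const_mul a).add (hm₂.const_mul b), ?_, a * C₁ + b * C₂, ?_⟩
      · filter_upwards [h0₁, h0₂] with ω u1 u2; positivity
      · filter_upwards [hC₁, hC₂] with ω u1 u2
        exact add_le_add (mul_le_mul_of_nonneg_left u1 ha) (mul_le_mul_of_nonneg_left u2 hb)
    · rcases eq_or_lt_of_le ha with ha0 | ha0
      · have he : (fun ω => a * Y₁ ω + b * Y₂ ω) = Y₂ := by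
          have hb1 : b = 1 := by linarith
          funext ω; rw [← ha0, hb1]; ring
        rw [he]; exact hρ₂
      rcases eq_or_lt_of_le hb with hb0 | hb0
      · have he : (fun ω => a * Y₁ ω + b * Y₂ ω) = Y₁ := by
          have ha1 : a = 1 := by linarith
          funext ω; rw [← hb0, ha1]; ring
        rw [he]; exact hρ₁
      · have hb' : b = 1 - a := by linarith
        have h := hconv Y₁ Y₂ hY₁ hY₂ a ⟨ha0, by linarith⟩
        rw [hb']
        calc ρ (fun ω => a * Y₁ ω + (1 - a) * Y₂ ω) ≤ a * ρ Y₁ + (1 - a) * ρ Y₂ := h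
          _ ≤ a * 1 + (1 - a) * 1 := add_le_add (mul_le_mul_of_nonneg_left hρ₁ ha)
              (mul_le_mul_of_nonneg_left hρ₂ (by linarith))
          _ = 1 := by ring
    · filter_upwards [Lp.coeFn_add (a • g₁) (b • g₂), Lp.coeFn_smul a g₁, Lp.coeFn_smul b g₂,
        hae₁, hae₂] with ω e1 e2 e3 e4 e5
      simp only [e1, Pi.add_apply, e2, e3, Pi.smul_apply, smul_eq_mul, e4, e5]
  have h0s : (0 : Lp ℝ 2 P) ∈ s :=
    ⟨fun _ => 0, ⟨measurable_const, ae_of_all _ fun _ => le_rfl,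
      0, ae_of_all _ fun _ => le_rfl⟩, rho_zero_le_one P ρ hhom, Lp.coeFn_zero ℝ 2 P⟩
  have hnotmem := rrm_not_mem_closure P ρ hmono hFatou hnonneg X hX hρX
  obtain ⟨f, u, hfs, hfx⟩ :=
    geometric_hahn_banach_closed_point hconvs.closure isClosed_closure hnotmem
  obtain ⟨z, hz⟩ := (InnerProductSpace.toDual ℝ (Lp ℝ 2 P)).surjective f
  have hzy : ∀ y : Lp ℝ 2 P, f y = ∫ ω, (z : Ω → ℝ) ω * (y : Ω → ℝ) ω ∂P := by
    intro y
    rw [← hz, InnerProductSpace.toDual_apply_apply, MeasureTheory.L2.inner_def]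
    congr 1
    funext ω; rw [RCLike.inner_apply', conj_trivial]
  have hzsm := (Lp.aestronglyMeasurable z)
  set w : Ω → ℝ := hzsm.mk (z : Ω → ℝ) with hw
  have hwmeas : Measurable w := hzsm.stronglyMeasurable_mk.measurable
  have hwae : (z : Ω → ℝ) =ᵐ[P] w := hzsm.ae_eq_mk
  have hzint : Integrable (z : Ω → ℝ) P := (Lp.memLp z).integrable (by norm_num)
  have hwint : Integrable w P := hzint.congr hwae
  set Z : Ω → ℝ := fun ω => max (w ω) 0 with hZ
  have hZmeas : Measurable Z := hwmeas.max measurable_const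
  have hZnn : ∀ ω, 0 ≤ Z ω := fun ω => le_max_right _ _
  have hZint : Integrable Z P := hwint.pos_part
  have hu0 : 0 < u := by
    have := hfs 0 (subset_closure h0s)
    rwa [map_zero] at this
  refine ⟨Z, hZmeas, hZnn, hZint, u, hu0, ?_, ?_⟩
  · intro Y hY hρY
    set Y' : Ω → ℝ := fun ω => if 0 ≤ w ω then Y ω else 0 with hY'
    obtain ⟨hm', h0', C', hC'⟩ := hY
    have hY'mem : MemLinftyPlus P Y' := by
      refine ⟨Measurable.ite (measurableSet_le measurable_const hwmeas) hm' measurable_const,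
        ?_, max C' 0, ?_⟩
      · filter_upwards [h0'] with ω h
        by_cases hh : 0 ≤ w ω <;> simp [hY', hh, h]
      · filter_upwards [hC'] with ω h
        by_cases hh : 0 ≤ w ω <;> simp [hY', hh]
        · exact Or.inl h
    have hY'ρ : ρ Y' ≤ 1 := by
      refine le_trans (hmono Y' Y hY'mem ⟨hm', h0', C', hC'⟩ ?_) hρY
      filter_upwards [h0'] with ω h
      by_cases hh : 0 ≤ w ω <;> simp [hY', hh, h]
    have hY's : (hY'mem.memLp2 (P := P)).toLp Y' ∈ s :=
      ⟨Y', hY'mem, hY'ρ, MemLp.coeFn_toLp _⟩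
    have hlt := hfs _ (subset_closure hY's)
    rw [hzy] at hlt
    have heq : ∫ ω, (z : Ω → ℝ) ω * ((hY'mem.memLp2 (P := P)).toLp Y' : Ω → ℝ) ω ∂P
        = ∫ ω, Z ω * Y ω ∂P := by
      refine integral_congr_ae ?_
      filter_upwards [hwae, MemLp.coeFn_toLp (hY'mem.memLp2 (P := P))] with ω e1 e2
      rw [e1, e2]
      by_cases hh : 0 ≤ w ω
      · simp [hY', hZ, hh, max_eq_left hh]
      · simp [hY', hZ, hh, max_eq_right (le_of_not_ge hh)]
    rwa [heq] at hlt
  · have hfx' := hfx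
    rw [hzy] at hfx'
    have heq : ∫ ω, (z : Ω → ℝ) ω * ((hX.memLp2 (P := P)).toLp X : Ω → ℝ) ω ∂P
        = ∫ ω, w ω * X ω ∂P := by
      refine integral_congr_ae ?_
      filter_upwards [hwae, MemLp.coeFn_toLp (hX.memLp2 (P := P))] with ω e1 e2
      rw [e1, e2]
    rw [heq] at hfx'
    refine lt_of_lt_of_le hfx' (integral_mono_ae (hX.integrable_mul hwint)
      (hX.integrable_mul hZint) ?_)
    filter_upwards [hX.2.1] with ω h
    exact mul_le_mul_of_nonneg_right (le_max_left _ _) h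

end AuxRRM

/-- dual representation of a convex return risk measure with the
Fatou property: `ρ(X) = sup_{Q ≪ P} β(Q) E_Q[X]` where
`β(Q) = (sup_{Y ∈ B_ρ} E_Q[Y])⁻¹` (with `(+∞)⁻¹ = 0`). -/
theorem convexReturnRiskMeasure_dual_representation
    (P : Measure Ω) [IsProbabilityMeasure P] (ρ : (Ω → ℝ) → ℝ)
    (hmono : ∀ X Y : Ω → ℝ, MemLinftyPlus P X → MemLinftyPlus P Y →
      (∀ᵐ ω ∂P, X ω ≤ Y ω) → ρ X ≤ ρ Y)
    (hhom : ∀ X : Ω → ℝ, MemLinftyPlus P X → ∀ l : ℝ, 0 ≤ l →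
      ρ (fun ω => l * X ω) = l * ρ X)
    (hnorm : ρ (fun _ => (1 : ℝ)) = 1)
    (hnonneg : ∀ X : Ω → ℝ, MemLinftyPlus P X → 0 ≤ ρ X)
    (hconv : ∀ X Y : Ω → ℝ, MemLinftyPlus P X → MemLinftyPlus P Y →
      ∀ a ∈ Set.Ioo (0 : ℝ) 1,
        ρ (fun ω => a * X ω + (1 - a) * Y ω) ≤ a * ρ X + (1 - a) * ρ Y)
    (hFatou : ∀ (X : Ω → ℝ) (Xn : ℕ → Ω → ℝ) (k : ℝ),
      MemLinftyPlus P X → (∀ n, MemLinftyPlus P (Xn n)) →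
      (∀ n, ∀ᵐ ω ∂P, |Xn n ω| ≤ k) →
      TendstoInMeasure P Xn atTop X →
      ρ X ≤ atTop.liminf fun n => ρ (Xn n))
    (X : Ω → ℝ) (hX : MemLinftyPlus P X) :
    ENNReal.ofReal (ρ X) =
      ⨆ (Q : Measure Ω) (_ : IsProbabilityMeasure Q) (_ : Q ≪ P),
        (⨆ (Y : Ω → ℝ) (_ : MemLinftyPlus P Y ∧ ρ Y ≤ 1),
            ENNReal.ofReal (∫ ω, Y ω ∂Q))⁻¹ *
          ENNReal.ofReal (∫ ω, X ω ∂Q) := by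
  classical
  refine le_antisymm ?_ ?_
  · -- hard direction: `ρ X` is dominated by the dual supremum
    rcases le_or_gt (ρ X) 0 with hρ0 | hρ0
    · rw [ENNReal.ofReal_eq_zero.2 hρ0]; exact zero_le
    have key : ∀ r : ℝ, 0 < r → r < ρ X →
        ENNReal.ofReal r ≤
          ⨆ (Q : Measure Ω) (_ : IsProbabilityMeasure Q) (_ : Q ≪ P),
            (⨆ (Y : Ω → ℝ) (_ : MemLinftyPlus P Y ∧ ρ Y ≤ 1),
                ENNReal.ofReal (∫ ω, Y ω ∂Q))⁻¹ *
              ENNReal.ofReal (∫ ω, X ω ∂Q) := by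
      intro r hr0 hr
      have hX' : MemLinftyPlus P fun ω => r⁻¹ * X ω := hX.const_mul' (by positivity)
      have hρX' : 1 < ρ fun ω => r⁻¹ * X ω := by
        rw [hhom X hX _ (by positivity : (0:ℝ) ≤ r⁻¹), ← div_eq_inv_mul]
        exact (one_lt_div hr0).2 hr
      obtain ⟨Z, hZm, hZnn, hZint, u, hu0, hub, hlb⟩ :=
        rrm_separation P ρ hmono hhom hnonneg hconv hFatou _ hX' hρX'
      set c : ℝ := ∫ ω, Z ω ∂P with hc
      have hcnn : 0 ≤ c := integral_nonneg fun ω => hZnn ω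
      have hc0 : 0 < c := by
        rcases hcnn.lt_or_eq with h | h
        · exact h
        · exfalso
          have hz0 : Z =ᵐ[P] 0 := by
            rw [← integral_eq_zero_iff_of_nonneg (fun ω => hZnn ω) hZint]
            exact h.symm
          have hzero : ∫ ω, Z ω * (r⁻¹ * X ω) ∂P = 0 := by
            rw [show (0:ℝ) = ∫ (_ : Ω), (0:ℝ) ∂P by simp]
            refine integral_congr_ae ?_
            filter_upwards [hz0] with ω h1
            simp [h1]
          rw [hzero] at hlb
          linarith
      set Q : Measure Ω := P.withDensity (fun ω => ENNReal.ofReal (Z ω / c)) with hQdef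
      have hmeasd : Measurable fun ω => (Z ω / c).toNNReal :=
        measurable_real_toNNReal.comp (hZm.div_const c)
      have hdens : (fun ω => ENNReal.ofReal (Z ω / c))
          = fun ω => ((Z ω / c).toNNReal : ℝ≥0∞) := rfl
      haveI hQp : IsProbabilityMeasure Q := by
        constructor
        rw [hQdef, withDensity_apply _ MeasurableSet.univ, setLIntegral_univ,
          ← ofReal_integral_eq_lintegral_ofReal (hZint.div_const c)
            (ae_of_all _ fun ω => div_nonneg (hZnn ω) hc0.le),
          integral_div, ← hc, div_self hc0.ne', ENNReal.ofReal_one]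
      have hQac : Q ≪ P := withDensity_absolutelyContinuous _ _
      have intQ : ∀ g : Ω → ℝ, ∫ ω, g ω ∂Q = c⁻¹ * ∫ ω, Z ω * g ω ∂P := by
        intro g
        rw [hQdef, hdens, integral_withDensity_eq_integral_smul hmeasd]
        rw [show (fun ω => (Z ω / c).toNNReal • g ω) = fun ω => c⁻¹ * (Z ω * g ω) from
          funext fun ω => by
            rw [NNReal.smul_def, Real.coe_toNNReal _ (div_nonneg (hZnn ω) hc0.le),
              smul_eq_mul]; ring]
        exact integral_const_mul _ _
      refine le_iSup_of_le Q (le_iSup_of_le hQp (le_iSup_of_le hQac ?_))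
      have hS : (⨆ (Y : Ω → ℝ) (_ : MemLinftyPlus P Y ∧ ρ Y ≤ 1),
            ENNReal.ofReal (∫ ω, Y ω ∂Q)) ≤ ENNReal.ofReal (u / c) := by
        refine iSup_le fun Y => iSup_le fun hY => ENNReal.ofReal_le_ofReal ?_
        rw [intQ Y, div_eq_inv_mul]
        exact mul_le_mul_of_nonneg_left (hub Y hY.1 hY.2).le (by positivity)
      have hXQ : ENNReal.ofReal r * ENNReal.ofReal (u / c)
          ≤ ENNReal.ofReal (∫ ω, X ω ∂Q) := by
        rw [← ENNReal.ofReal_mul hr0.le]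
        refine ENNReal.ofReal_le_ofReal ?_
        rw [intQ X]
        have h2 : ∫ ω, Z ω * X ω ∂P = r * ∫ ω, Z ω * (r⁻¹ * X ω) ∂P := by
          rw [← integral_const_mul]
          refine integral_congr_ae (ae_of_all _ fun ω => ?_)
          field_simp
        rw [h2, div_eq_inv_mul]
        have h4 : (0:ℝ) < c⁻¹ := by positivity
        have h5 : c⁻¹ * (r * u) ≤ c⁻¹ * (r * ∫ ω, Z ω * (r⁻¹ * X ω) ∂P) :=
          mul_le_mul_of_nonneg_left (mul_le_mul_of_nonneg_left hlb.le hr0.le) h4.le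
        linarith [h5, (by ring : r * (c⁻¹ * u) = c⁻¹ * (r * u))]
      have hucne : ENNReal.ofReal (u / c) ≠ 0 := by
        rw [Ne, ENNReal.ofReal_eq_zero, not_le]
        positivity
      calc ENNReal.ofReal r
          = (ENNReal.ofReal (u/c))⁻¹ * (ENNReal.ofReal r * ENNReal.ofReal (u/c)) := by
            rw [mul_comm (ENNReal.ofReal r), ← mul_assoc,
              ENNReal.inv_mul_cancel hucne ENNReal.ofReal_ne_top, one_mul]
        _ ≤ (⨆ (Y : Ω → ℝ) (_ : MemLinftyPlus P Y ∧ ρ Y ≤ 1),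
              ENNReal.ofReal (∫ ω, Y ω ∂Q))⁻¹ * ENNReal.ofReal (∫ ω, X ω ∂Q) :=
            mul_le_mul' (ENNReal.inv_le_inv' hS) hXQ
    refine ENNReal.le_of_forall_pos_le_add fun ε hε _ => ?_
    set δ : ℝ := min ((ε:ℝ)/2) (ρ X / 2) with hδ
    have hε0 : (0:ℝ) < ε := hε
    have hδ0 : 0 < δ := lt_min (by positivity) (by positivity)
    have hδρ : δ < ρ X := (min_le_right _ _).trans_lt (by linarith)
    calc ENNReal.ofReal (ρ X) ≤ ENNReal.ofReal (ρ X - δ) + ENNReal.ofReal δ := by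
          rw [← ENNReal.ofReal_add (by linarith) hδ0.le]
          exact ENNReal.ofReal_le_ofReal (by linarith)
      _ ≤ _ + (ε : ℝ≥0∞) := by
          refine add_le_add (key _ (by linarith) (by linarith)) ?_
          rw [← ENNReal.ofReal_coe_nnreal]
          exact ENNReal.ofReal_le_ofReal ((min_le_left _ _).trans (by linarith))
  · -- easy direction
    refine iSup_le fun Q => iSup_le fun hQp => iSup_le fun hQac => ?_
    rcases le_or_gt (∫ ω, X ω ∂Q) 0 with hd | hd
    · rw [ENNReal.ofReal_eq_zero.2 hd, mul_zero]; exact zero_le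
    rcases le_or_gt (ρ X) 0 with hρ0 | hρ0
    · have hStop : (⨆ (Y : Ω → ℝ) (_ : MemLinftyPlus P Y ∧ ρ Y ≤ 1),
          ENNReal.ofReal (∫ ω, Y ω ∂Q)) = ⊤ := by
        by_contra hne
        obtain ⟨n, hn⟩ := exists_nat_gt
          ((⨆ (Y : Ω → ℝ) (_ : MemLinftyPlus P Y ∧ ρ Y ≤ 1),
            ENNReal.ofReal (∫ ω, Y ω ∂Q)).toReal / (∫ ω, X ω ∂Q))
        have hYn : MemLinftyPlus P fun ω => (n:ℝ) * X ω := hX.const_mul' (Nat.cast_nonneg n)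
        have hρn : ρ (fun ω => (n:ℝ) * X ω) ≤ 1 := by
          rw [hhom X hX _ (Nat.cast_nonneg n)]
          have hnp : (n:ℝ) * ρ X ≤ 0 :=
            mul_nonpos_of_nonneg_of_nonpos (Nat.cast_nonneg n) hρ0
          linarith
        have hle : ENNReal.ofReal ((n:ℝ) * ∫ ω, X ω ∂Q)
            ≤ ⨆ (Y : Ω → ℝ) (_ : MemLinftyPlus P Y ∧ ρ Y ≤ 1),
                ENNReal.ofReal (∫ ω, Y ω ∂Q) := by
          refine le_iSup_of_le (fun ω => (n:ℝ) * X ω) (le_iSup_of_le ⟨hYn, hρn⟩ ?_)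
          rw [integral_const_mul]
        have hle' := (ENNReal.ofReal_le_iff_le_toReal hne).1 hle
        rw [div_lt_iff₀ hd] at hn
        linarith
      rw [hStop, ENNReal.inv_top, zero_mul]; exact zero_le
    · have hY : MemLinftyPlus P fun ω => (ρ X)⁻¹ * X ω := hX.const_mul' (by positivity)
      have hρY : ρ (fun ω => (ρ X)⁻¹ * X ω) ≤ 1 := by
        rw [hhom X hX _ (by positivity), inv_mul_cancel₀ hρ0.ne']
      have hSge : ENNReal.ofReal ((∫ ω, X ω ∂Q) / ρ X)
          ≤ ⨆ (Y : Ω → ℝ) (_ : MemLinftyPlus P Y ∧ ρ Y ≤ 1),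
              ENNReal.ofReal (∫ ω, Y ω ∂Q) := by
        refine le_iSup_of_le _ (le_iSup_of_le ⟨hY, hρY⟩ ?_)
        rw [integral_const_mul, inv_mul_eq_div]
      have hdne : ENNReal.ofReal (∫ ω, X ω ∂Q) ≠ 0 := by
        rw [Ne, ENNReal.ofReal_eq_zero, not_le]; exact hd
      calc (⨆ (Y : Ω → ℝ) (_ : MemLinftyPlus P Y ∧ ρ Y ≤ 1),
              ENNReal.ofReal (∫ ω, Y ω ∂Q))⁻¹ * ENNReal.ofReal (∫ ω, X ω ∂Q)
          ≤ (ENNReal.ofReal ((∫ ω, X ω ∂Q) / ρ X))⁻¹ * ENNReal.ofReal (∫ ω, X ω ∂Q) :=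
            mul_le_mul_left (ENNReal.inv_le_inv' hSge) _
        _ = ENNReal.ofReal (ρ X) := by
            rw [ENNReal.ofReal_div_of_pos hρ0,
              ENNReal.inv_div (Or.inr ENNReal.ofReal_ne_top) (Or.inr hdne)]
            exact ENNReal.div_mul_cancel hdne ENNReal.ofReal_ne_top
end
end

section
/- Let Φ be an Orlicz function and H_Φ the associated Orlicz premium on L∞₊. Suppose X, Y, Z ∈ L∞₊ satisfy H_Φ(X) = H_Φ(Y) = γ ∈ [0,∞), and the law of Z is the mixture λ·(law of X) + (1−λ)·(law of Y) for some λ ∈ (0,1). Then H_Φ(Z) = γ. -/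
open MeasureTheory Filter Set
open scoped ENNReal

noncomputable section

variable {Ω : Type*} [MeasurableSpace Ω]

/- ========= auxiliary lemmas ========= -/

lemma aux_one_lt_top : (1:EReal) < ⊤ := by
  rw [show (1:EReal) = ((1:ℝ):EReal) from rfl]; exact EReal.coe_lt_top 1

lemma aux_mono_e : Monotone erealToENNReal := by
  intro x y h
  unfold erealToENNReal
  induction x <;> induction y <;> simp_all
  exact ENNReal.ofReal_le_ofReal (by exact_mod_cast h)

lemma aux_e_coe (a : ℝ≥0∞) (ha : a ≠ ⊤) : (a : EReal) = ((a.toReal : ℝ) : EReal) := by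
  conv_lhs => rw [← ENNReal.ofReal_toReal ha]
  rw [EReal.coe_ennreal_ofReal, max_eq_left ENNReal.toReal_nonneg]

lemma aux_sub_coe (a b : ℝ≥0∞) (ha : a ≠ ⊤) (hb : b ≠ ⊤) :
    ((a:EReal) - b) = ((a.toReal - b.toReal : ℝ) : EReal) := by
  rw [aux_e_coe a ha, aux_e_coe b hb, ← EReal.coe_sub]

lemma aux_top_sub (b : ℝ≥0∞) (hb : b ≠ ⊤) : (⊤:EReal) - b = ⊤ := by
  lift b to NNReal using hb
  exact EReal.top_sub_coe b

lemma aux_sub_enntop (a : EReal) : a - ((⊤:ℝ≥0∞):EReal) = ⊥ := by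
  rw [EReal.coe_ennreal_top]; simp

lemma aux_meas_pos (Φ : ℝ → EReal) (hΦ : IsOrliczFunction Φ) (k : ℝ) (hk : 0 < k) :
    Measurable (fun x : ℝ => erealToENNReal (Φ (max x 0 / k))) := by
  have hmono : Monotone (fun x : ℝ => erealToENNReal (Φ (max x 0 / k))) := by
    intro x y hxy
    apply aux_mono_e
    apply hΦ.mono _ _ (div_nonneg (le_max_right x 0) hk.le)
    exact div_le_div_of_nonneg_right (max_le_max hxy le_rfl) hk.le
  exact hmono.measurable

lemma aux_meas_neg (Φ : ℝ → EReal) (hΦ : IsOrliczFunction Φ) (k : ℝ) (hk : 0 < k) :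
    Measurable (fun x : ℝ => erealToENNReal (-(Φ (max x 0 / k)))) := by
  have hanti : Antitone (fun x : ℝ => erealToENNReal (-(Φ (max x 0 / k)))) := by
    intro x y hxy
    apply aux_mono_e
    apply EReal.neg_le_neg_iff.mpr
    apply hΦ.mono _ _ (div_nonneg (le_max_right x 0) hk.le)
    exact div_le_div_of_nonneg_right (max_le_max hxy le_rfl) hk.le
  exact hanti.measurable

lemma aux_eexp_eq (P : Measure Ω) (Φ : ℝ → EReal) (W : Ω → ℝ)
    (hW0 : ∀ᵐ ω ∂P, 0 ≤ W ω) (k : ℝ) :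
    eexp P (fun ω => Φ (W ω / k)) =
      ((∫⁻ ω, erealToENNReal (Φ (max (W ω) 0 / k)) ∂P : ℝ≥0∞) : EReal)
        - ((∫⁻ ω, erealToENNReal (-(Φ (max (W ω) 0 / k))) ∂P : ℝ≥0∞) : EReal) := by
  unfold eexp
  have h1 : (∫⁻ ω, erealToENNReal (Φ (W ω / k)) ∂P)
      = ∫⁻ ω, erealToENNReal (Φ (max (W ω) 0 / k)) ∂P := by
    apply lintegral_congr_ae
    filter_upwards [hW0] with ω h0
    rw [max_eq_left h0]
  have h2 : (∫⁻ ω, erealToENNReal (-(Φ (W ω / k))) ∂P)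
      = ∫⁻ ω, erealToENNReal (-(Φ (max (W ω) 0 / k))) ∂P := by
    apply lintegral_congr_ae
    filter_upwards [hW0] with ω h0
    rw [max_eq_left h0]
  rw [h1, h2]

lemma aux_upclosed (P : Measure Ω) (Φ : ℝ → EReal) (hΦ : IsOrliczFunction Φ)
    (W : Ω → ℝ) (hW0 : ∀ᵐ ω ∂P, 0 ≤ W ω) (k k' : ℝ) (hk : 0 < k) (hkk : k ≤ k') :
    eexp P (fun ω => Φ (W ω / k')) ≤ eexp P (fun ω => Φ (W ω / k)) := by
  have hk' : 0 < k' := lt_of_lt_of_le hk hkk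
  have hpt : ∀ᵐ ω ∂P, Φ (W ω / k') ≤ Φ (W ω / k) := by
    filter_upwards [hW0] with ω h0
    apply hΦ.mono _ _ (div_nonneg h0 hk'.le)
    rw [div_le_div_iff₀ hk' hk]
    nlinarith
  unfold eexp
  apply EReal.sub_le_sub
  · apply EReal.coe_ennreal_le_coe_ennreal_iff.mpr
    apply lintegral_mono_ae
    filter_upwards [hpt] with ω h
    exact aux_mono_e h
  · apply EReal.coe_ennreal_le_coe_ennreal_iff.mpr
    apply lintegral_mono_ae
    filter_upwards [hpt] with ω h
    exact aux_mono_e (EReal.neg_le_neg_iff.mpr h)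

lemma aux_mem (P : Measure Ω) [IsProbabilityMeasure P] (Φ : ℝ → EReal)
    (hΦ : IsOrliczFunction Φ) (W : Ω → ℝ) (hW : MemLinftyPlus P W) :
    ∃ k : ℝ, 0 < k ∧ eexp P (fun ω => Φ (W ω / k)) ≤ 1 := by
  obtain ⟨hWm, hW0, C, hWC⟩ := hW
  have hk : (0:ℝ) < max C 0 + 1 := by positivity
  refine ⟨max C 0 + 1, hk, ?_⟩
  have h1 : ∀ᵐ ω ∂P, erealToENNReal (Φ (W ω / (max C 0 + 1))) ≤ 1 := by
    filter_upwards [hW0, hWC] with ω h0 hC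
    have hdiv0 : 0 ≤ W ω / (max C 0 + 1) := div_nonneg h0 hk.le
    have hdiv1 : W ω / (max C 0 + 1) ≤ 1 := by
      rw [div_le_one hk]
      have := le_max_left C 0
      linarith
    have hle := hΦ.le_one _ hdiv0 hdiv1
    calc erealToENNReal (Φ (W ω / (max C 0 + 1))) ≤ erealToENNReal 1 := aux_mono_e hle
    _ = 1 := by
        unfold erealToENNReal
        rw [if_neg (by
          rw [show (1:EReal) = ((1:ℝ):EReal) from rfl]
          exact EReal.coe_ne_top 1)]
        simp
  have hA : (∫⁻ ω, erealToENNReal (Φ (W ω / (max C 0 + 1))) ∂P) ≤ 1 := by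
    calc (∫⁻ ω, erealToENNReal (Φ (W ω / (max C 0 + 1))) ∂P) ≤ ∫⁻ _, 1 ∂P :=
          lintegral_mono_ae h1
    _ = 1 := by simp
  unfold eexp
  calc ((∫⁻ ω, erealToENNReal (Φ (W ω / (max C 0 + 1))) ∂P : ℝ≥0∞) : EReal)
        - ((∫⁻ ω, erealToENNReal (-(Φ (W ω / (max C 0 + 1)))) ∂P : ℝ≥0∞) : EReal)
      ≤ ((∫⁻ ω, erealToENNReal (Φ (W ω / (max C 0 + 1))) ∂P : ℝ≥0∞) : EReal) - 0 :=
        EReal.sub_le_sub le_rfl (EReal.coe_ennreal_nonneg _)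
  _ = ((∫⁻ ω, erealToENNReal (Φ (W ω / (max C 0 + 1))) ∂P : ℝ≥0∞) : EReal) := sub_zero _
  _ ≤ 1 := by
      rw [← EReal.coe_ennreal_one]
      exact EReal.coe_ennreal_le_coe_ennreal_iff.mpr hA

lemma aux_upper (l m aX bX aY bY : ℝ≥0∞) (hl0 : l ≠ 0) (hm0 : m ≠ 0)
    (hlt : l ≠ ⊤) (hmt : m ≠ ⊤) (hlm : l + m = 1)
    (hX : (aX:EReal) - bX ≤ 1) (hY : (aY:EReal) - bY ≤ 1) :
    ((l*aX + m*aY : ℝ≥0∞):EReal) - ((l*bX + m*bY : ℝ≥0∞):EReal) ≤ 1 := by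
  by_cases hbX : bX = ⊤
  · have hb : l*bX + m*bY = ⊤ := by rw [hbX, ENNReal.mul_top hl0, top_add]
    rw [hb, aux_sub_enntop]
    exact bot_le
  by_cases hbY : bY = ⊤
  · have hb : l*bX + m*bY = ⊤ := by rw [hbY, ENNReal.mul_top hm0, add_top]
    rw [hb, aux_sub_enntop]
    exact bot_le
  have haX : aX ≠ ⊤ := by
    intro h
    rw [h, EReal.coe_ennreal_top, aux_top_sub _ hbX] at hX
    exact absurd hX (not_le.mpr aux_one_lt_top)
  have haY : aY ≠ ⊤ := by
    intro h
    rw [h, EReal.coe_ennreal_top, aux_top_sub _ hbY] at hY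
    exact absurd hY (not_le.mpr aux_one_lt_top)
  have h1 : l*aX + m*aY ≠ ⊤ :=
    ENNReal.add_ne_top.mpr ⟨ENNReal.mul_ne_top hlt haX, ENNReal.mul_ne_top hmt haY⟩
  have h2 : l*bX + m*bY ≠ ⊤ :=
    ENNReal.add_ne_top.mpr ⟨ENNReal.mul_ne_top hlt hbX, ENNReal.mul_ne_top hmt hbY⟩
  rw [aux_sub_coe _ _ haX hbX] at hX
  rw [aux_sub_coe _ _ haY hbY] at hY
  have hX' : aX.toReal - bX.toReal ≤ 1 := by exact_mod_cast hX
  have hY' : aY.toReal - bY.toReal ≤ 1 := by exact_mod_cast hY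
  have hsum : l.toReal + m.toReal = 1 := by
    rw [← ENNReal.toReal_add hlt hmt, hlm]; simp
  rw [aux_sub_coe _ _ h1 h2]
  rw [ENNReal.toReal_add (ENNReal.mul_ne_top hlt haX) (ENNReal.mul_ne_top hmt haY),
    ENNReal.toReal_add (ENNReal.mul_ne_top hlt hbX) (ENNReal.mul_ne_top hmt hbY),
    ENNReal.toReal_mul, ENNReal.toReal_mul, ENNReal.toReal_mul, ENNReal.toReal_mul]
  have : l.toReal * aX.toReal + m.toReal * aY.toReal
      - (l.toReal * bX.toReal + m.toReal * bY.toReal) ≤ 1 := by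
    nlinarith [ENNReal.toReal_nonneg (a := l), ENNReal.toReal_nonneg (a := m),
      mul_le_mul_of_nonneg_left hX' (ENNReal.toReal_nonneg (a := l)),
      mul_le_mul_of_nonneg_left hY' (ENNReal.toReal_nonneg (a := m))]
  exact_mod_cast this

lemma aux_lower (l m aX bX aY bY : ℝ≥0∞) (hl0 : l ≠ 0) (hm0 : m ≠ 0)
    (hlt : l ≠ ⊤) (hmt : m ≠ ⊤) (hlm : l + m = 1)
    (hX : 1 < (aX:EReal) - bX) (hY : 1 < (aY:EReal) - bY) :
    1 < ((l*aX + m*aY : ℝ≥0∞):EReal) - ((l*bX + m*bY : ℝ≥0∞):EReal) := by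
  have hbX : bX ≠ ⊤ := by
    intro h
    rw [h, aux_sub_enntop] at hX
    exact absurd hX (by simp)
  have hbY : bY ≠ ⊤ := by
    intro h
    rw [h, aux_sub_enntop] at hY
    exact absurd hY (by simp)
  have h2 : l*bX + m*bY ≠ ⊤ :=
    ENNReal.add_ne_top.mpr ⟨ENNReal.mul_ne_top hlt hbX, ENNReal.mul_ne_top hmt hbY⟩
  by_cases haX : aX = ⊤
  · have ha : l*aX + m*aY = ⊤ := by rw [haX, ENNReal.mul_top hl0, top_add]
    rw [ha, EReal.coe_ennreal_top, aux_top_sub _ h2]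
    exact aux_one_lt_top
  by_cases haY : aY = ⊤
  · have ha : l*aX + m*aY = ⊤ := by rw [haY, ENNReal.mul_top hm0, add_top]
    rw [ha, EReal.coe_ennreal_top, aux_top_sub _ h2]
    exact aux_one_lt_top
  have h1 : l*aX + m*aY ≠ ⊤ :=
    ENNReal.add_ne_top.mpr ⟨ENNReal.mul_ne_top hlt haX, ENNReal.mul_ne_top hmt haY⟩
  rw [aux_sub_coe _ _ haX hbX] at hX
  rw [aux_sub_coe _ _ haY hbY] at hY
  have hX' : (1:ℝ) < aX.toReal - bX.toReal := by exact_mod_cast hX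
  have hY' : (1:ℝ) < aY.toReal - bY.toReal := by exact_mod_cast hY
  have hsum : l.toReal + m.toReal = 1 := by
    rw [← ENNReal.toReal_add hlt hmt, hlm]; simp
  have hl0' : 0 < l.toReal := ENNReal.toReal_pos hl0 hlt
  have hm0' : 0 < m.toReal := ENNReal.toReal_pos hm0 hmt
  rw [aux_sub_coe _ _ h1 h2]
  rw [ENNReal.toReal_add (ENNReal.mul_ne_top hlt haX) (ENNReal.mul_ne_top hmt haY),
    ENNReal.toReal_add (ENNReal.mul_ne_top hlt hbX) (ENNReal.mul_ne_top hmt hbY),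
    ENNReal.toReal_mul, ENNReal.toReal_mul, ENNReal.toReal_mul, ENNReal.toReal_mul]
  have : (1:ℝ) < l.toReal * aX.toReal + m.toReal * aY.toReal
      - (l.toReal * bX.toReal + m.toReal * bY.toReal) := by
    nlinarith [mul_lt_mul_of_pos_left hX' hl0', mul_lt_mul_of_pos_left hY' hm0']
  exact_mod_cast this

/-- the Orlicz premium has convex level sets with respect to mixtures
of laws (the CxLS property). -/
theorem orliczPremium_cxls
    (P : Measure Ω) [IsProbabilityMeasure P] (Φ : ℝ → EReal)
    (hΦ : IsOrliczFunction Φ)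
    (X Y Z : Ω → ℝ) (hX : MemLinftyPlus P X) (hY : MemLinftyPlus P Y)
    (hZ : MemLinftyPlus P Z) (γ : ℝ) (hγ : 0 ≤ γ)
    (hHX : orliczPremium P Φ X = γ) (hHY : orliczPremium P Φ Y = γ)
    (l : ℝ) (hl : l ∈ Set.Ioo (0 : ℝ) 1)
    (hlaw : P.map Z =
      ENNReal.ofReal l • P.map X + ENNReal.ofReal (1 - l) • P.map Y) :
    orliczPremium P Φ Z = γ := by
  obtain ⟨hl0, hl1⟩ := hl
  set l' := ENNReal.ofReal l with hl'def
  set m' := ENNReal.ofReal (1 - l) with hm'def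
  have hl'0 : l' ≠ 0 := by
    rw [hl'def, Ne, ENNReal.ofReal_eq_zero, not_le]; exact hl0
  have hm'0 : m' ≠ 0 := by
    rw [hm'def, Ne, ENNReal.ofReal_eq_zero, not_le]; linarith
  have hl't : l' ≠ ⊤ := ENNReal.ofReal_ne_top
  have hm't : m' ≠ ⊤ := ENNReal.ofReal_ne_top
  have hlm : l' + m' = 1 := by
    rw [hl'def, hm'def, ← ENNReal.ofReal_add (by linarith) (by linarith)]
    norm_num
  have hmapW : ∀ W : Ω → ℝ, Measurable W → P {ω | W ω = 0} = P.map W {0} := by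
    intro W hW
    rw [Measure.map_apply hW (measurableSet_singleton 0)]
    rfl
  have hmix0 : P {ω | Z ω = 0} = l' * P {ω | X ω = 0} + m' * P {ω | Y ω = 0} := by
    rw [hmapW Z hZ.1, hlaw, Measure.add_apply, Measure.smul_apply, Measure.smul_apply,
      smul_eq_mul, smul_eq_mul, ← hmapW X hX.1, ← hmapW Y hY.1]
  by_cases hz0 : Φ 0 = ⊥ ∧ 0 < P {ω | Z ω = 0}
  · unfold orliczPremium
    rw [if_pos hz0]
    rcases hz0 with ⟨hbot, hpos⟩
    rw [hmix0] at hpos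
    have hor : P {ω | X ω = 0} ≠ 0 ∨ P {ω | Y ω = 0} ≠ 0 := by
      by_contra h
      push_neg at h
      rw [h.1, h.2, mul_zero, mul_zero, add_zero] at hpos
      exact lt_irrefl 0 hpos
    rcases hor with h | h
    · unfold orliczPremium at hHX
      rw [if_pos ⟨hbot, pos_iff_ne_zero.mpr h⟩] at hHX
      exact hHX
    · unfold orliczPremium at hHY
      rw [if_pos ⟨hbot, pos_iff_ne_zero.mpr h⟩] at hHY
      exact hHY
  · unfold orliczPremium
    rw [if_neg hz0]
    have hx0 : ¬(Φ 0 = ⊥ ∧ 0 < P {ω | X ω = 0}) := by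
      rintro ⟨hbot, hpos⟩
      refine hz0 ⟨hbot, ?_⟩
      rw [hmix0]
      calc (0:ℝ≥0∞) < l' * P {ω | X ω = 0} := ENNReal.mul_pos hl'0 hpos.ne'
      _ ≤ _ := le_self_add
    have hy0 : ¬(Φ 0 = ⊥ ∧ 0 < P {ω | Y ω = 0}) := by
      rintro ⟨hbot, hpos⟩
      refine hz0 ⟨hbot, ?_⟩
      rw [hmix0]
      calc (0:ℝ≥0∞) < m' * P {ω | Y ω = 0} := ENNReal.mul_pos hm'0 hpos.ne'
      _ ≤ _ := le_add_self
    unfold orliczPremium at hHX hHY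
    rw [if_neg hx0] at hHX
    rw [if_neg hy0] at hHY
    obtain ⟨kX, hkXmem⟩ := aux_mem P Φ hΦ X hX
    obtain ⟨kY, hkYmem⟩ := aux_mem P Φ hΦ Y hY
    obtain ⟨kZ, hkZmem⟩ := aux_mem P Φ hΦ Z hZ
    have hSXne : Set.Nonempty {k : ℝ | 0 < k ∧ eexp P (fun ω => Φ (X ω / k)) ≤ 1} :=
      ⟨kX, hkXmem⟩
    have hSYne : Set.Nonempty {k : ℝ | 0 < k ∧ eexp P (fun ω => Φ (Y ω / k)) ≤ 1} :=
      ⟨kY, hkYmem⟩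
    have hSZne : Set.Nonempty {k : ℝ | 0 < k ∧ eexp P (fun ω => Φ (Z ω / k)) ≤ 1} :=
      ⟨kZ, hkZmem⟩
    have hbddX : BddBelow {k : ℝ | 0 < k ∧ eexp P (fun ω => Φ (X ω / k)) ≤ 1} :=
      ⟨0, fun k hk => hk.1.le⟩
    have hbddY : BddBelow {k : ℝ | 0 < k ∧ eexp P (fun ω => Φ (Y ω / k)) ≤ 1} :=
      ⟨0, fun k hk => hk.1.le⟩
    have hbddZ : BddBelow {k : ℝ | 0 < k ∧ eexp P (fun ω => Φ (Z ω / k)) ≤ 1} :=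
      ⟨0, fun k hk => hk.1.le⟩
    have key : ∀ k : ℝ, 0 < k → ∃ aX bX aY bY : ℝ≥0∞,
        eexp P (fun ω => Φ (X ω / k)) = (aX:EReal) - bX ∧
        eexp P (fun ω => Φ (Y ω / k)) = (aY:EReal) - bY ∧
        eexp P (fun ω => Φ (Z ω / k)) =
          ((l'*aX + m'*aY : ℝ≥0∞):EReal) - ((l'*bX + m'*bY : ℝ≥0∞):EReal) := by
      intro k hk
      refine ⟨∫⁻ ω, erealToENNReal (Φ (max (X ω) 0 / k)) ∂P,
        ∫⁻ ω, erealToENNReal (-(Φ (max (X ω) 0 / k))) ∂P,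
        ∫⁻ ω, erealToENNReal (Φ (max (Y ω) 0 / k)) ∂P,
        ∫⁻ ω, erealToENNReal (-(Φ (max (Y ω) 0 / k))) ∂P,
        aux_eexp_eq P Φ X hX.2.1 k, aux_eexp_eq P Φ Y hY.2.1 k, ?_⟩
      rw [aux_eexp_eq P Φ Z hZ.2.1 k]
      have hgP := aux_meas_pos Φ hΦ k hk
      have hgN := aux_meas_neg Φ hΦ k hk
      have hZpos : (∫⁻ ω, erealToENNReal (Φ (max (Z ω) 0 / k)) ∂P)
          = l' * (∫⁻ ω, erealToENNReal (Φ (max (X ω) 0 / k)) ∂P)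
            + m' * (∫⁻ ω, erealToENNReal (Φ (max (Y ω) 0 / k)) ∂P) := by
        calc (∫⁻ ω, erealToENNReal (Φ (max (Z ω) 0 / k)) ∂P)
            = ∫⁻ x, erealToENNReal (Φ (max x 0 / k)) ∂(P.map Z) :=
              (lintegral_map hgP hZ.1).symm
        _ = _ := by
            rw [hlaw, lintegral_add_measure, lintegral_smul_measure,
              lintegral_smul_measure, lintegral_map hgP hX.1, lintegral_map hgP hY.1, smul_eq_mul, smul_eq_mul]
      have hZneg : (∫⁻ ω, erealToENNReal (-(Φ (max (Z ω) 0 / k))) ∂P)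
          = l' * (∫⁻ ω, erealToENNReal (-(Φ (max (X ω) 0 / k))) ∂P)
            + m' * (∫⁻ ω, erealToENNReal (-(Φ (max (Y ω) 0 / k))) ∂P) := by
        calc (∫⁻ ω, erealToENNReal (-(Φ (max (Z ω) 0 / k))) ∂P)
            = ∫⁻ x, erealToENNReal (-(Φ (max x 0 / k))) ∂(P.map Z) :=
              (lintegral_map hgN hZ.1).symm
        _ = _ := by
            rw [hlaw, lintegral_add_measure, lintegral_smul_measure,
              lintegral_smul_measure, lintegral_map hgN hX.1, lintegral_map hgN hY.1, smul_eq_mul, smul_eq_mul]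
      rw [hZpos, hZneg]
    apply le_antisymm
    · apply le_of_forall_gt_imp_ge_of_dense
      intro k hk
      have hk0 : 0 < k := lt_of_le_of_lt hγ hk
      have hkXle : eexp P (fun ω => Φ (X ω / k)) ≤ 1 := by
        obtain ⟨s, hs, hsk⟩ := exists_lt_of_csInf_lt hSXne (by rw [hHX]; exact hk)
        exact le_trans (aux_upclosed P Φ hΦ X hX.2.1 s k hs.1 hsk.le) hs.2
      have hkYle : eexp P (fun ω => Φ (Y ω / k)) ≤ 1 := by
        obtain ⟨s, hs, hsk⟩ := exists_lt_of_csInf_lt hSYne (by rw [hHY]; exact hk)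
        exact le_trans (aux_upclosed P Φ hΦ Y hY.2.1 s k hs.1 hsk.le) hs.2
      apply csInf_le hbddZ
      refine ⟨hk0, ?_⟩
      obtain ⟨aX, bX, aY, bY, eX, eY, eZ⟩ := key k hk0
      rw [eZ]
      rw [eX] at hkXle
      rw [eY] at hkYle
      exact aux_upper l' m' aX bX aY bY hl'0 hm'0 hl't hm't hlm hkXle hkYle
    · apply le_csInf hSZne
      intro k hk
      obtain ⟨hk0, hk2⟩ := hk
      by_contra hcon
      push_neg at hcon
      have hnX : ¬ eexp P (fun ω => Φ (X ω / k)) ≤ 1 := by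
        intro hle
        have : γ ≤ k := by rw [← hHX]; exact csInf_le hbddX ⟨hk0, hle⟩
        linarith
      have hnY : ¬ eexp P (fun ω => Φ (Y ω / k)) ≤ 1 := by
        intro hle
        have : γ ≤ k := by rw [← hHY]; exact csInf_le hbddY ⟨hk0, hle⟩
        linarith
      obtain ⟨aX, bX, aY, bY, eX, eY, eZ⟩ := key k hk0
      rw [eX] at hnX
      rw [eY] at hnY
      have hgt := aux_lower l' m' aX bX aY bY hl'0 hm'0 hl't hm't hlm
        (not_le.mp hnX) (not_le.mp hnY)
      rw [eZ] at hk2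
      exact absurd hk2 (not_le.mpr hgt)
end
end
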